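/- arXiv:2109.06366 — 4 statements merged into one kernel-verified Lean document; each statement's English description precedes it below -/
import Mathlib

section
/- The Cauchy split conditional density integrates to 1: for all n > 0 and z ∈ ℝ, ∫_{−∞}^{∞} (n/(2π))·(z²+4n²)/((n²+x²)(n²+(z−x)²)) dx = 1. -/
open Real MeasureTheory Filter Topology

private lemma cauchy_integrable_aux (n z : ℝ) (hn : 0 < n) :
    Integrable (fun x : ℝ => ((n ^ 2 + x ^ 2) * (n ^ 2 + (z - x) ^ 2))⁻¹) := by
  have hn' : n ≠ 0 := ne_of_gt hn
  have hcont : Continuous (fun x : ℝ => ((n ^ 2 + x ^ 2) * (n ^ 2 + (z - x) ^ 2))⁻¹) :=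
    Continuous.inv₀ (by continuity) (fun x => by positivity)
  have hbase : Integrable (fun x : ℝ => (1 + (x / n) ^ 2)⁻¹) :=
    integrable_inv_one_add_sq.comp_div hn'
  apply (hbase.const_mul (n ^ 2 * n ^ 2)⁻¹).mono' hcont.aestronglyMeasurable
  filter_upwards with x
  rw [Real.norm_eq_abs, abs_of_nonneg (by positivity)]
  have h1 : (0 : ℝ) < n ^ 2 + x ^ 2 := by positivity
  have key : ((n ^ 2 + x ^ 2) * (n ^ 2 + (z - x) ^ 2))⁻¹ ≤ ((n ^ 2 + x ^ 2) * n ^ 2)⁻¹ := by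
    apply inv_anti₀ (by positivity)
    nlinarith [sq_nonneg (z - x), mul_nonneg h1.le (sq_nonneg (z - x))]
  refine key.trans (le_of_eq ?_)
  field_simp

private lemma cauchy_log_aux (n z : ℝ) (hn : 0 < n) :
    Tendsto (fun x : ℝ => Real.log (n ^ 2 + x ^ 2) - Real.log (n ^ 2 + (z - x) ^ 2))
      atTop (𝓝 0) := by
  have hx2 : Tendsto (fun x : ℝ => n ^ 2 * (x⁻¹) ^ 2) atTop (𝓝 0) := by
    simpa using (tendsto_inv_atTop_zero.pow 2).const_mul (n ^ 2)
  have hz : Tendsto (fun x : ℝ => z * x⁻¹) atTop (𝓝 0) := by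
    simpa using tendsto_inv_atTop_zero.const_mul z
  have hr : Tendsto (fun x : ℝ =>
      (n ^ 2 * (x⁻¹) ^ 2 + 1) / (n ^ 2 * (x⁻¹) ^ 2 + (z * x⁻¹ - 1) ^ 2)) atTop (𝓝 1) := by
    have := (hx2.add (tendsto_const_nhds (x := (1 : ℝ)))).div
      (hx2.add ((hz.sub (tendsto_const_nhds (x := (1 : ℝ)))).pow 2)) (by norm_num)
    rw [show ((0 : ℝ) + 1) / (0 + (0 - 1) ^ 2) = 1 by norm_num] at this
    exact this
  have heq : (fun x : ℝ =>
      (n ^ 2 * (x⁻¹) ^ 2 + 1) / (n ^ 2 * (x⁻¹) ^ 2 + (z * x⁻¹ - 1) ^ 2)) =ᶠ[atTop]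
      (fun x : ℝ => (n ^ 2 + x ^ 2) / (n ^ 2 + (z - x) ^ 2)) := by
    filter_upwards [eventually_gt_atTop 0] with x hx
    have hx0 : x ≠ 0 := ne_of_gt hx
    have hxi : (0 : ℝ) < (x⁻¹) ^ 2 := pow_pos (inv_pos.mpr hx) 2
    have hd : (0 : ℝ) < n ^ 2 * (x⁻¹) ^ 2 + (z * x⁻¹ - 1) ^ 2 :=
      add_pos_of_pos_of_nonneg (mul_pos (pow_pos hn 2) hxi) (sq_nonneg _)
    rw [div_eq_div_iff hd.ne' (by positivity)]
    field_simp
  have hr' := hr.congr' heq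
  have hcont := (Real.continuousAt_log one_ne_zero).tendsto.comp hr'
  rw [Real.log_one] at hcont
  refine hcont.congr (fun x => ?_)
  have h1 : (n ^ 2 + x ^ 2 : ℝ) ≠ 0 := by positivity
  have h2 : (n ^ 2 + (z - x) ^ 2 : ℝ) ≠ 0 := by positivity
  simp only [Function.comp_apply]
  rw [Real.log_div h1 h2]

private lemma cauchy_log_aux_bot (n z : ℝ) (hn : 0 < n) :
    Tendsto (fun x : ℝ => Real.log (n ^ 2 + x ^ 2) - Real.log (n ^ 2 + (z - x) ^ 2))
      atBot (𝓝 0) := by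
  have h := (cauchy_log_aux n (-z) hn).comp tendsto_neg_atBot_atTop
  refine h.congr (fun x => ?_)
  simp only [Function.comp_apply]
  rw [neg_sq, show (-z - -x) ^ 2 = (z - x) ^ 2 by ring]

private lemma cauchy_key (n z : ℝ) (hn : 0 < n) :
    ∫ x : ℝ, ((n ^ 2 + x ^ 2) * (n ^ 2 + (z - x) ^ 2))⁻¹
      = 2 * π / (n * (z ^ 2 + 4 * n ^ 2)) := by
  have hn' : n ≠ 0 := ne_of_gt hn
  have harcTop : Tendsto (fun x : ℝ => arctan (x / n)) atTop (𝓝 (π / 2)) :=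
    (tendsto_nhds_of_tendsto_nhdsWithin tendsto_arctan_atTop).comp
      (tendsto_id.atTop_div_const hn)
  have harcBot : Tendsto (fun x : ℝ => arctan (x / n)) atBot (𝓝 (-(π / 2))) :=
    (tendsto_nhds_of_tendsto_nhdsWithin tendsto_arctan_atBot).comp
      (tendsto_id.atBot_div_const hn)
  rcases eq_or_ne z 0 with rfl | hz
  · -- z = 0 case
    set F : ℝ → ℝ := fun x => (2 * n ^ 2)⁻¹ * (x / (n ^ 2 + x ^ 2))
      + (2 * n ^ 3)⁻¹ * arctan (x / n) with hFdef
    have hF : ∀ x : ℝ, HasDerivAt F (((n ^ 2 + x ^ 2) * (n ^ 2 + (0 - x) ^ 2))⁻¹) x := by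
      intro x
      have h1 : (0 : ℝ) < n ^ 2 + x ^ 2 := by positivity
      have hd1 : HasDerivAt (fun x : ℝ => n ^ 2 + x ^ 2) (2 * x) x := by
        simpa using (hasDerivAt_pow 2 x).const_add (n ^ 2)
      have hdiv : HasDerivAt (fun x : ℝ => x / (n ^ 2 + x ^ 2))
          ((1 * (n ^ 2 + x ^ 2) - x * (2 * x)) / (n ^ 2 + x ^ 2) ^ 2) x :=
        (hasDerivAt_id x).div hd1 h1.ne'
      have harc : HasDerivAt (fun x : ℝ => arctan (x / n))
          (1 / (1 + (x / n) ^ 2) * (1 / n)) x :=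
        ((hasDerivAt_id x).div_const n).arctan
      have hsum := (hdiv.const_mul ((2 * n ^ 2)⁻¹)).add (harc.const_mul ((2 * n ^ 3)⁻¹))
      refine hsum.congr_deriv ?_
      have h2 : (1 : ℝ) + (x / n) ^ 2 ≠ 0 := by positivity
      field_simp
      ring
    have hxTop : Tendsto (fun x : ℝ => x / (n ^ 2 + x ^ 2)) atTop (𝓝 0) := by
      have hx2 : Tendsto (fun x : ℝ => n ^ 2 * (x⁻¹) ^ 2) atTop (𝓝 0) := by
        simpa using (tendsto_inv_atTop_zero.pow 2).const_mul (n ^ 2)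
      have h := tendsto_inv_atTop_zero.div
        (hx2.add (tendsto_const_nhds (x := (1 : ℝ)))) (by norm_num)
      rw [zero_div] at h
      refine h.congr' ?_
      filter_upwards [eventually_gt_atTop 0] with x hx
      have hx0 : x ≠ 0 := ne_of_gt hx
      have h1 : (0 : ℝ) < n ^ 2 + x ^ 2 := by positivity
      have hxi : (0 : ℝ) < (x⁻¹) ^ 2 := pow_pos (inv_pos.mpr hx) 2
      have hd : (0 : ℝ) < n ^ 2 * (x⁻¹) ^ 2 + 1 :=
        add_pos_of_pos_of_nonneg (mul_pos (pow_pos hn 2) hxi) zero_le_one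
      simp only [Pi.div_apply]
      rw [div_eq_div_iff hd.ne' h1.ne']
      field_simp
    have hxBot : Tendsto (fun x : ℝ => x / (n ^ 2 + x ^ 2)) atBot (𝓝 0) := by
      have h := (hxTop.comp tendsto_neg_atBot_atTop).neg
      rw [neg_zero] at h
      refine h.congr (fun x => ?_)
      simp only [Function.comp_apply]
      rw [neg_sq]
      ring
    have hbot : Tendsto F atBot
        (𝓝 ((2 * n ^ 2)⁻¹ * 0 + (2 * n ^ 3)⁻¹ * (-(π / 2)))) :=
      (hxBot.const_mul _).add (harcBot.const_mul _)
    have htop : Tendsto F atTop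
        (𝓝 ((2 * n ^ 2)⁻¹ * 0 + (2 * n ^ 3)⁻¹ * (π / 2))) :=
      (hxTop.const_mul _).add (harcTop.const_mul _)
    rw [integral_of_hasDerivAt_of_tendsto hF (cauchy_integrable_aux n 0 hn) hbot htop]
    field_simp
    ring
  · -- z ≠ 0 case
    set c : ℝ := z ^ 2 + 4 * n ^ 2 with hcdef
    have hc : (0 : ℝ) < c := by positivity
    set F : ℝ → ℝ := fun x =>
      (z * c)⁻¹ * (Real.log (n ^ 2 + x ^ 2) - Real.log (n ^ 2 + (z - x) ^ 2))
      + (n * c)⁻¹ * (arctan (x / n) + arctan ((x - z) / n)) with hFdef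
    have hF : ∀ x : ℝ, HasDerivAt F (((n ^ 2 + x ^ 2) * (n ^ 2 + (z - x) ^ 2))⁻¹) x := by
      intro x
      have h1 : (0 : ℝ) < n ^ 2 + x ^ 2 := by positivity
      have h2 : (0 : ℝ) < n ^ 2 + (z - x) ^ 2 := by positivity
      have hd1 : HasDerivAt (fun x : ℝ => n ^ 2 + x ^ 2) (2 * x) x := by
        simpa using (hasDerivAt_pow 2 x).const_add (n ^ 2)
      have hd2 : HasDerivAt (fun x : ℝ => n ^ 2 + (z - x) ^ 2) (-(2 * (z - x))) x := by
        have h := (((hasDerivAt_id x).const_sub z).pow 2).const_add (n ^ 2)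
        simp only [id_eq] at h
        refine h.congr_deriv ?_
        push_cast
        ring
      have hlog1 := hd1.log h1.ne'
      have hlog2 := hd2.log h2.ne'
      have harc1 : HasDerivAt (fun x : ℝ => arctan (x / n))
          (1 / (1 + (x / n) ^ 2) * (1 / n)) x :=
        ((hasDerivAt_id x).div_const n).arctan
      have harc2 : HasDerivAt (fun x : ℝ => arctan ((x - z) / n))
          (1 / (1 + ((x - z) / n) ^ 2) * (1 / n)) x :=
        (((hasDerivAt_id x).sub_const z).div_const n).arctan
      have hsum := ((hlog1.sub hlog2).const_mul ((z * c)⁻¹)).add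
        ((harc1.add harc2).const_mul ((n * c)⁻¹))
      refine hsum.congr_deriv ?_
      have h3 : (1 : ℝ) + (x / n) ^ 2 ≠ 0 := by positivity
      have h4 : (1 : ℝ) + ((x - z) / n) ^ 2 ≠ 0 := by positivity
      rw [hcdef]
      field_simp
      ring
    have harcTop2 : Tendsto (fun x : ℝ => arctan ((x - z) / n)) atTop (𝓝 (π / 2)) := by
      have := harcTop.comp (tendsto_atTop_add_const_right atTop (-z) tendsto_id)
      refine this.congr (fun x => ?_)
      simp [Function.comp_apply, sub_eq_add_neg]
    have harcBot2 : Tendsto (fun x : ℝ => arctan ((x - z) / n)) atBot (𝓝 (-(π / 2))) := by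
      have := harcBot.comp (tendsto_atBot_add_const_right atBot (-z) tendsto_id)
      refine this.congr (fun x => ?_)
      simp [Function.comp_apply, sub_eq_add_neg]
    have htop : Tendsto F atTop
        (𝓝 ((z * c)⁻¹ * 0 + (n * c)⁻¹ * (π / 2 + π / 2))) :=
      (((cauchy_log_aux n z hn)).const_mul _).add
        ((harcTop.add harcTop2).const_mul _)
    have hbot : Tendsto F atBot
        (𝓝 ((z * c)⁻¹ * 0 + (n * c)⁻¹ * (-(π / 2) + -(π / 2)))) :=
      (((cauchy_log_aux_bot n z hn)).const_mul _).add
        ((harcBot.add harcBot2).const_mul _)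
    rw [integral_of_hasDerivAt_of_tendsto hF (cauchy_integrable_aux n z hn) hbot htop]
    rw [hcdef]
    field_simp
    ring

/-- The Cauchy split conditional density integrates to 1: for all `n > 0` and
`z ∈ ℝ`, `∫ (n/(2π))·(z²+4n²)/((n²+x²)(n²+(z−x)²)) dx = 1`. -/
theorem stmt_8 (n z : ℝ) (hn : 0 < n) :
    ∫ x : ℝ,
      n / (2 * π) * ((z ^ 2 + 4 * n ^ 2) / ((n ^ 2 + x ^ 2) * (n ^ 2 + (z - x) ^ 2))) = 1 := by
  have h : ∀ x : ℝ, n / (2 * π) * ((z ^ 2 + 4 * n ^ 2) / ((n ^ 2 + x ^ 2) * (n ^ 2 + (z - x) ^ 2)))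
      = (n / (2 * π) * (z ^ 2 + 4 * n ^ 2)) * ((n ^ 2 + x ^ 2) * (n ^ 2 + (z - x) ^ 2))⁻¹ :=
    fun x => by ring
  simp_rw [h]
  rw [integral_const_mul, cauchy_key n z hn]
  have hπ : π ≠ 0 := Real.pi_ne_zero
  have hc : z ^ 2 + 4 * n ^ 2 ≠ 0 := by positivity
  have hn' : n ≠ 0 := ne_of_gt hn
  field_simp
end

section
/- The convolution of two Cauchy(0,n) densities equals the Cauchy(0,2n) density: for all n > 0 and z ∈ ℝ, ∫_{−∞}^{∞} [n/(π(n²+x²))]·[n/(π(n²+(z−x)²))] dx = 2n/(π(4n²+z²)). -/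
open Real MeasureTheory Filter Topology

private lemma integral_eq_of_hasDerivAt_of_tendsto {F f : ℝ → ℝ} {A B : ℝ}
    (hderiv : ∀ x, HasDerivAt F (f x) x) (hint : Integrable f)
    (hbot : Tendsto F atBot (𝓝 A)) (htop : Tendsto F atTop (𝓝 B)) :
    ∫ x, f x = B - A := by
  have h1 : Tendsto (fun R : ℝ => ∫ x in (-R)..R, f x) atTop (𝓝 (∫ x, f x)) :=
    intervalIntegral_tendsto_integral hint tendsto_neg_atTop_atBot tendsto_id
  have h2 : Tendsto (fun R : ℝ => ∫ x in (-R)..R, f x) atTop (𝓝 (B - A)) := by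
    have h3 : Tendsto (fun R : ℝ => F R - F (-R)) atTop (𝓝 (B - A)) :=
      htop.sub (hbot.comp tendsto_neg_atTop_atBot)
    refine h3.congr fun R => ?_
    exact (intervalIntegral.integral_eq_sub_of_hasDerivAt (fun x _ => hderiv x)
      hint.intervalIntegrable).symm
  exact tendsto_nhds_unique h1 h2

private lemma tendsto_inv_atBot_zero'' : Tendsto (fun x : ℝ => x⁻¹) atBot (𝓝 0) := by
  have h2 := ((tendsto_inv_atTop_zero (𝕜 := ℝ)).comp tendsto_neg_atBot_atTop).neg
  simp only [Function.comp_def, inv_neg, neg_neg, neg_zero] at h2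
  exact h2

private lemma log_ratio_tendsto (n z : ℝ) (hn : 0 < n) {l : Filter ℝ}
    (hl : Tendsto (fun x : ℝ => x⁻¹) l (𝓝 0)) (hev : ∀ᶠ x in l, x ≠ 0) :
    Tendsto (fun x : ℝ => Real.log (n ^ 2 + x ^ 2) - Real.log (n ^ 2 + (z - x) ^ 2)) l
      (𝓝 0) := by
  have h1 : Tendsto (fun x : ℝ => (n * x⁻¹) ^ 2 + 1) l (𝓝 1) := by
    simpa using ((hl.const_mul n).pow 2).add_const 1
  have h2 : Tendsto (fun x : ℝ => (n * x⁻¹) ^ 2 + (z * x⁻¹ - 1) ^ 2) l (𝓝 1) := by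
    have := ((hl.const_mul n).pow 2).add (((hl.const_mul z).sub_const 1).pow 2)
    norm_num at this
    simpa using this
  have hr : Tendsto (fun x : ℝ =>
      ((n * x⁻¹) ^ 2 + 1) / ((n * x⁻¹) ^ 2 + (z * x⁻¹ - 1) ^ 2)) l (𝓝 1) := by
    have := h1.div h2 one_ne_zero
    rw [div_one] at this
    exact this
  have hr' : Tendsto (fun x : ℝ => (n ^ 2 + x ^ 2) / (n ^ 2 + (z - x) ^ 2)) l (𝓝 1) := by
    refine hr.congr' ?_
    filter_upwards [hev] with x hx
    rw [div_eq_div_iff (by positivity) (by positivity)]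
    field_simp
    try ring
  have hlog := hr'.log one_ne_zero
  rw [Real.log_one] at hlog
  refine hlog.congr fun x => ?_
  rw [Real.log_div (by positivity) (by positivity)]

private lemma term1_tendsto (n : ℝ) (hn : 0 < n) {l : Filter ℝ}
    (hl : Tendsto (fun x : ℝ => x⁻¹) l (𝓝 0)) (hev : ∀ᶠ x in l, x ≠ 0) :
    Tendsto (fun x : ℝ => x / (2 * n ^ 2 * (n ^ 2 + x ^ 2))) l (𝓝 0) := by
  have hden : Tendsto (fun x : ℝ => 2 * n ^ 2 * ((n * x⁻¹) ^ 2 + 1)) l (𝓝 (2 * n ^ 2)) := by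
    have := (((hl.const_mul n).pow 2).add_const 1).const_mul (2 * n ^ 2)
    norm_num at this
    simpa using this
  have haux : Tendsto (fun x : ℝ => x⁻¹ / (2 * n ^ 2 * ((n * x⁻¹) ^ 2 + 1))) l (𝓝 0) := by
    have := hl.div hden (by positivity)
    rw [zero_div] at this
    exact this
  refine haux.congr' ?_
  filter_upwards [hev] with x hx
  rw [div_eq_div_iff (by positivity) (by positivity)]
  field_simp

private lemma arctan_comp_tendsto_atTop (n c : ℝ) (hn : 0 < n) :
    Tendsto (fun x : ℝ => Real.arctan ((x - c) / n)) atTop (𝓝 (π / 2)) := by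
  have h1 : Tendsto (fun x : ℝ => (x - c) / n) atTop atTop :=
    (tendsto_atTop_add_const_right atTop (-c) tendsto_id).atTop_div_const hn
  exact (Real.tendsto_arctan_atTop.mono_right nhdsWithin_le_nhds).comp h1

private lemma arctan_comp_tendsto_atBot (n c : ℝ) (hn : 0 < n) :
    Tendsto (fun x : ℝ => Real.arctan ((x - c) / n)) atBot (𝓝 (-(π / 2))) := by
  have h1 : Tendsto (fun x : ℝ => (x - c) / n) atBot atBot :=
    (tendsto_atBot_add_const_right atBot (-c) tendsto_id).atBot_div_const hn
  exact (Real.tendsto_arctan_atBot.mono_right nhdsWithin_le_nhds).comp h1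

/-- The convolution of two `Cauchy(0,n)` densities equals the `Cauchy(0,2n)`
density: for all `n > 0` and `z ∈ ℝ`,
`∫ [n/(π(n²+x²))]·[n/(π(n²+(z−x)²))] dx = 2n/(π(4n²+z²))`. -/
theorem stmt_9 (n z : ℝ) (hn : 0 < n) :
    ∫ x : ℝ, (n / (π * (n ^ 2 + x ^ 2))) * (n / (π * (n ^ 2 + (z - x) ^ 2))) =
      2 * n / (π * (4 * n ^ 2 + z ^ 2)) := by
  have hπ : (π : ℝ) ≠ 0 := Real.pi_ne_zero
  have hn' : n ≠ 0 := hn.ne'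
  -- integrability
  have hint : Integrable (fun x : ℝ =>
      (n / (π * (n ^ 2 + x ^ 2))) * (n / (π * (n ^ 2 + (z - x) ^ 2)))) := by
    have hg : Integrable (fun x : ℝ => (1 + (x / n) ^ 2)⁻¹) :=
      integrable_inv_one_add_sq.comp_div hn'
    refine (hg.const_mul (1 / (π ^ 2 * n ^ 2))).mono' ?_ (ae_of_all _ fun x => ?_)
    · have c1 : Continuous fun x : ℝ => n / (π * (n ^ 2 + x ^ 2)) :=
        continuous_const.div (by continuity) (fun x => by positivity)
      have c2 : Continuous fun x : ℝ => n / (π * (n ^ 2 + (z - x) ^ 2)) :=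
        continuous_const.div (by continuity) (fun x => by positivity)
      exact (c1.mul c2).aestronglyMeasurable
    · have hx1 : (0:ℝ) < n ^ 2 + x ^ 2 := by positivity
      have hx2 : (0:ℝ) < n ^ 2 + (z - x) ^ 2 := by positivity
      rw [Real.norm_eq_abs, abs_of_nonneg (by positivity)]
      calc (n / (π * (n ^ 2 + x ^ 2))) * (n / (π * (n ^ 2 + (z - x) ^ 2)))
          ≤ (n / (π * (n ^ 2 + x ^ 2))) * (n / (π * n ^ 2)) := by
            gcongr
            all_goals first
              | positivity
              | exact Real.pi_pos.le
              | linarith [sq_nonneg (z - x)]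
        _ = 1 / (π ^ 2 * n ^ 2) * (1 + (x / n) ^ 2)⁻¹ := by
            field_simp
  have hevTop : ∀ᶠ x : ℝ in atTop, x ≠ 0 := by
    filter_upwards [eventually_gt_atTop (0:ℝ)] with x hx using hx.ne'
  have hevBot : ∀ᶠ x : ℝ in atBot, x ≠ 0 := by
    filter_upwards [eventually_lt_atBot (0:ℝ)] with x hx using hx.ne
  rcases eq_or_ne z 0 with rfl | hz
  · -- z = 0 case
    set F : ℝ → ℝ := fun x =>
      n ^ 2 / π ^ 2 * (x / (2 * n ^ 2 * (n ^ 2 + x ^ 2)) + Real.arctan (x / n) / (2 * n ^ 3))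
      with hF
    have hderiv : ∀ x : ℝ, HasDerivAt F
        ((n / (π * (n ^ 2 + x ^ 2))) * (n / (π * (n ^ 2 + (0 - x) ^ 2)))) x := by
      intro x
      have hx1 : (0:ℝ) < n ^ 2 + x ^ 2 := by positivity
      have d1 : HasDerivAt (fun x : ℝ => x / (2 * n ^ 2 * (n ^ 2 + x ^ 2)))
          ((1 * (2 * n ^ 2 * (n ^ 2 + x ^ 2)) - x * (2 * n ^ 2 * (2 * x ^ 1)))
            / (2 * n ^ 2 * (n ^ 2 + x ^ 2)) ^ 2) x :=
        (hasDerivAt_id x).div (((hasDerivAt_pow 2 x).const_add (n ^ 2)).const_mul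
          (2 * n ^ 2)) (by positivity)
      have d2 : HasDerivAt (fun x : ℝ => Real.arctan (x / n) / (2 * n ^ 3))
          (1 / (1 + (x / n) ^ 2) * (1 / n) / (2 * n ^ 3)) x :=
        (((hasDerivAt_id x).div_const n).arctan).div_const (2 * n ^ 3)
      have hD := (d1.add d2).const_mul (n ^ 2 / π ^ 2)
      refine hD.congr_deriv ?_
      have hx2 : (0:ℝ) < 1 + (x / n) ^ 2 := by positivity
      field_simp
      ring
    have htop : Tendsto F atTop (𝓝 (n ^ 2 / π ^ 2 * (0 + (π / 2) / (2 * n ^ 3)))) := by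
      refine Tendsto.const_mul _ (Tendsto.add ?_ ?_)
      · exact term1_tendsto n hn tendsto_inv_atTop_zero hevTop
      · have := arctan_comp_tendsto_atTop n 0 hn
        simp only [sub_zero] at this
        exact this.div_const _
    have hbot : Tendsto F atBot (𝓝 (n ^ 2 / π ^ 2 * (0 + (-(π / 2)) / (2 * n ^ 3)))) := by
      refine Tendsto.const_mul _ (Tendsto.add ?_ ?_)
      · exact term1_tendsto n hn tendsto_inv_atBot_zero'' hevBot
      · have := arctan_comp_tendsto_atBot n 0 hn
        simp only [sub_zero] at this
        exact this.div_const _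
    rw [integral_eq_of_hasDerivAt_of_tendsto hderiv hint hbot htop]
    field_simp
    ring
  · -- z ≠ 0 case
    set F : ℝ → ℝ := fun x =>
      n ^ 2 / π ^ 2 * ((1 / (z * (z ^ 2 + 4 * n ^ 2)))
          * (Real.log (n ^ 2 + x ^ 2) - Real.log (n ^ 2 + (z - x) ^ 2))
        + (1 / ((z ^ 2 + 4 * n ^ 2) * n))
          * (Real.arctan (x / n) + Real.arctan ((x - z) / n))) with hF
    have hderiv : ∀ x : ℝ, HasDerivAt F
        ((n / (π * (n ^ 2 + x ^ 2))) * (n / (π * (n ^ 2 + (z - x) ^ 2)))) x := by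
      intro x
      have hx1 : (0:ℝ) < n ^ 2 + x ^ 2 := by positivity
      have hx2 : (0:ℝ) < n ^ 2 + (z - x) ^ 2 := by positivity
      have dA : HasDerivAt (fun x : ℝ => Real.log (n ^ 2 + x ^ 2))
          ((2 * x ^ 1) / (n ^ 2 + x ^ 2)) x :=
        ((hasDerivAt_pow 2 x).const_add (n ^ 2)).log hx1.ne'
      have dB : HasDerivAt (fun x : ℝ => Real.log (n ^ 2 + (z - x) ^ 2))
          ((2 * (z - x) ^ 1 * (-1)) / (n ^ 2 + (z - x) ^ 2)) x := by
        have hin : HasDerivAt (fun x : ℝ => z - x) (-1) x := by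
          simpa using (hasDerivAt_id x).const_sub z
        exact ((hin.pow 2).const_add (n ^ 2)).log hx2.ne'
      have dC : HasDerivAt (fun x : ℝ => Real.arctan (x / n))
          (1 / (1 + (x / n) ^ 2) * (1 / n)) x :=
        ((hasDerivAt_id x).div_const n).arctan
      have dD : HasDerivAt (fun x : ℝ => Real.arctan ((x - z) / n))
          (1 / (1 + ((x - z) / n) ^ 2) * (1 / n)) x :=
        (((hasDerivAt_id x).sub_const z).div_const n).arctan
      have hD := (((dA.sub dB).const_mul (1 / (z * (z ^ 2 + 4 * n ^ 2)))).add
        ((dC.add dD).const_mul (1 / ((z ^ 2 + 4 * n ^ 2) * n)))).const_mul (n ^ 2 / π ^ 2)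
      refine hD.congr_deriv ?_
      have h3 : (0:ℝ) < 1 + (x / n) ^ 2 := by positivity
      have h4 : (0:ℝ) < 1 + ((x - z) / n) ^ 2 := by positivity
      have h5 : (0:ℝ) < z ^ 2 + 4 * n ^ 2 := by positivity
      field_simp
      ring
    have htop : Tendsto F atTop (𝓝 (n ^ 2 / π ^ 2 * ((1 / (z * (z ^ 2 + 4 * n ^ 2))) * 0
        + (1 / ((z ^ 2 + 4 * n ^ 2) * n)) * (π / 2 + π / 2)))) := by
      refine Tendsto.const_mul _ (Tendsto.add (Tendsto.const_mul _ ?_)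
        (Tendsto.const_mul _ (Tendsto.add ?_ ?_)))
      · exact log_ratio_tendsto n z hn tendsto_inv_atTop_zero hevTop
      · have := arctan_comp_tendsto_atTop n 0 hn
        simpa using this
      · exact arctan_comp_tendsto_atTop n z hn
    have hbot : Tendsto F atBot (𝓝 (n ^ 2 / π ^ 2 * ((1 / (z * (z ^ 2 + 4 * n ^ 2))) * 0
        + (1 / ((z ^ 2 + 4 * n ^ 2) * n)) * (-(π / 2) + -(π / 2))))) := by
      refine Tendsto.const_mul _ (Tendsto.add (Tendsto.const_mul _ ?_)
        (Tendsto.const_mul _ (Tendsto.add ?_ ?_)))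
      · exact log_ratio_tendsto n z hn tendsto_inv_atBot_zero'' hevBot
      · have := arctan_comp_tendsto_atBot n 0 hn
        simpa using this
      · exact arctan_comp_tendsto_atBot n z hn
    rw [integral_eq_of_hasDerivAt_of_tendsto hderiv hint hbot htop]
    have h5 : (0:ℝ) < z ^ 2 + 4 * n ^ 2 := by positivity
    field_simp
    ring
end

section
/- In the dyadic simulation tree where the random seed C at each node of level l is produced by a k-wise independent hash function h^l applied to the node index, with a fresh hash function at each level: for every level l, any k of the 2^l range-sums at level l are mutually independent, and in particular the U leaf random variables X_0, ..., X_{U−1} are k-wise independent, each with distribution X. -/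
open MeasureTheory ProbabilityTheory

/-- The `n`-fold convolution power of a distribution `ν` on `ℝ`. -/
noncomputable def convPow (ν : MeasureTheory.Measure ℝ) (n : ℕ) : MeasureTheory.Measure ℝ :=
  MeasureTheory.Measure.map (fun x : Fin n → ℝ => ∑ i, x i)
    (MeasureTheory.Measure.pi fun _ => ν)


lemma convPow_one (ν : Measure ℝ) [IsProbabilityMeasure ν] : convPow ν 1 = ν := by
  rw [convPow]
  have h1 : (fun x : Fin 1 → ℝ => ∑ i, x i) = (MeasurableEquiv.funUnique (Fin 1) ℝ : (Fin 1 → ℝ) → ℝ) := by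
    funext x
    simp [MeasurableEquiv.funUnique, Finset.sum_fin_eq_sum_range]
  rw [h1]
  exact (measurePreserving_funUnique ν (Fin 1)).map_eq

section Aux
variable {Ω : Type*} {mΩ : MeasurableSpace Ω} {μ : Measure Ω}

variable {Ω : Type*} {mΩ : MeasurableSpace Ω} {μ : Measure Ω}

lemma aux_indep_mono {m1 m2 m1' m2' : MeasurableSpace Ω} (h : Indep m1 m2 μ)
    (h1 : m1' ≤ m1) (h2 : m2' ≤ m2) : Indep m1' m2' μ := by
  rw [Indep_iff] at h ⊢
  exact fun t1 t2 ht1 ht2 => h t1 t2 (h1 _ ht1) (h2 _ ht2)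

lemma aux_meas_comap {β γ : Type*} [mβ : MeasurableSpace β] [mγ : MeasurableSpace γ]
    (f : Ω → β) {g : β → γ} (hg : Measurable g) :
    Measurable[mβ.comap f] (g ∘ f) := fun t ht => ⟨g ⁻¹' t, hg ht, rfl⟩

lemma aux_indep_sup_left [IsProbabilityMeasure μ]
    {m1 m2 m3 : MeasurableSpace Ω} (h1 : m1 ≤ mΩ) (h2 : m2 ≤ mΩ) (h3 : m3 ≤ mΩ)
    (h12_3 : Indep m1 (m2 ⊔ m3) μ) (h23 : Indep m2 m3 μ) :
    Indep (m1 ⊔ m2) m3 μ := by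
  have hgen1 : (m1 ⊔ m2) = MeasurableSpace.generateFrom
      {s | ∃ a b, MeasurableSet[m1] a ∧ MeasurableSet[m2] b ∧ s = a ∩ b} := by
    apply le_antisymm
    · refine sup_le ?_ ?_
      · intro s hs
        exact MeasurableSpace.measurableSet_generateFrom
          ⟨s, Set.univ, hs, MeasurableSet.univ, (Set.inter_univ s).symm⟩
      · intro s hs
        exact MeasurableSpace.measurableSet_generateFrom
          ⟨Set.univ, s, MeasurableSet.univ, hs, (Set.univ_inter s).symm⟩
    · apply MeasurableSpace.generateFrom_le
      rintro s ⟨a, b, ha, hb, rfl⟩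
      exact ((le_sup_left : m1 ≤ m1 ⊔ m2) _ ha).inter ((le_sup_right : m2 ≤ m1 ⊔ m2) _ hb)
  refine IndepSets.indep (sup_le h1 h2) h3 ?_ ?_ hgen1
    (MeasurableSpace.generateFrom_measurableSet).symm ?_
  · rintro s ⟨a, b, ha, hb, rfl⟩ t ⟨a', b', ha', hb', rfl⟩ _
    exact ⟨a ∩ a', b ∩ b', ha.inter ha', hb.inter hb', by ext x; simp; tauto⟩
  · intro s hs t ht _
    exact hs.inter ht
  · rw [IndepSets_iff]
    rintro t1 t2 ⟨a, b, ha, hb, rfl⟩ ht2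
    rw [Indep_iff] at h12_3 h23
    have hb' : MeasurableSet[m2 ⊔ m3] b := (le_sup_left : m2 ≤ m2 ⊔ m3) _ hb
    have ht2' : MeasurableSet[m2 ⊔ m3] t2 := (le_sup_right : m3 ≤ m2 ⊔ m3) _ ht2
    calc μ (a ∩ b ∩ t2) = μ (a ∩ (b ∩ t2)) := by rw [Set.inter_assoc]
      _ = μ a * μ (b ∩ t2) := h12_3 a (b ∩ t2) ha (hb'.inter ht2')
      _ = μ a * (μ b * μ t2) := by rw [h23 b t2 hb ht2]
      _ = (μ a * μ b) * μ t2 := by ring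
      _ = μ (a ∩ b) * μ t2 := by rw [h12_3 a b ha hb']

lemma aux_biInter_image {α β : Type*} [DecidableEq β] (s : Finset α) (v : α → β) (g : β → Set Ω) :
    ⋂ n ∈ s.image v, g n = ⋂ i ∈ s, g (v i) := by
  ext ω
  simp only [Set.mem_iInter, Finset.mem_image]
  constructor
  · intro h i hi; exact h (v i) ⟨i, hi, rfl⟩
  · rintro h n ⟨i, hi, rfl⟩; exact h i hi

lemma aux_iIndep_to_Q {P : Finset ℕ} {m' : ℕ → MeasurableSpace Ω}
    (h : iIndep (fun p : P => m' p.1) μ) (s : Finset ℕ) (hs : s ⊆ P)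
    (G : ℕ → Set Ω) (hG : ∀ p ∈ s, MeasurableSet[m' p] (G p)) :
    μ (⋂ p ∈ s, G p) = ∏ p ∈ s, μ (G p) := by
  classical
  have hinj : Function.Injective (fun x : {x // x ∈ s} => (⟨x.1, hs x.2⟩ : {x // x ∈ P})) := by
    intro a b hab
    exact Subtype.ext (congrArg (fun y : {x // x ∈ P} => y.1) hab)
  set T : Finset {x // x ∈ P} := s.attach.map ⟨_, hinj⟩ with hT
  have hmem : ∀ i : {x // x ∈ P}, i ∈ T ↔ i.1 ∈ s := by
    intro i
    simp only [hT, Finset.mem_map, Finset.mem_attach, true_and, Function.Embedding.coeFn_mk]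
    constructor
    · rintro ⟨a, rfl⟩; exact a.2
    · intro hi; exact ⟨⟨i.1, hi⟩, rfl⟩
  have key := h.meas_biInter (S := T) (s := fun i => G i.1)
    (fun i hi => hG i.1 ((hmem i).1 hi))
  have h1 : (⋂ i ∈ T, G i.1) = ⋂ p ∈ s, G p := by
    ext ω
    simp only [Set.mem_iInter]
    exact ⟨fun hh p hp => hh ⟨p, hs hp⟩ ((hmem _).2 hp), fun hh i hi => hh i.1 ((hmem i).1 hi)⟩
  have h2 : (∏ i ∈ T, μ (G i.1)) = ∏ p ∈ s, μ (G p) := by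
    rw [hT, Finset.prod_map]
    exact Finset.prod_attach s fun p => μ (G p)
  rw [← h1, ← h2]
  exact key

lemma aux_subtype_to_Q {J : Finset ℕ} {f : ℕ → Ω → ℝ}
    (h : iIndepFun (fun j : J => f j.1) μ)
    (s : Finset ℕ) (hs : s ⊆ J) (E : ℕ → Set ℝ) (hE : ∀ j ∈ s, MeasurableSet (E j)) :
    μ (⋂ j ∈ s, f j ⁻¹' E j) = ∏ j ∈ s, μ (f j ⁻¹' E j) := by
  refine aux_iIndep_to_Q (m' := fun j => MeasurableSpace.comap (f j) inferInstance)
    ?_ s hs _ (fun j hj => ⟨E j, hE j hj, rfl⟩)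
  exact (iIndepFun_iff_iIndep _ _ _).1 h

lemma aux_Q_to_subtype {J : Finset ℕ} {f : ℕ → Ω → ℝ}
    (h : ∀ s : Finset ℕ, s ⊆ J → ∀ E : ℕ → Set ℝ, (∀ j ∈ s, MeasurableSet (E j)) →
      μ (⋂ j ∈ s, f j ⁻¹' E j) = ∏ j ∈ s, μ (f j ⁻¹' E j)) :
    iIndepFun (fun j : J => f j.1) μ := by
  classical
  rw [iIndepFun_iff_measure_inter_preimage_eq_mul]
  intro T sets hsets
  set s : Finset ℕ := T.image (fun i => i.1) with hs
  have hsJ : s ⊆ J := by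
    intro n hn
    rw [hs, Finset.mem_image] at hn
    obtain ⟨i, _, rfl⟩ := hn
    exact i.2
  set E : ℕ → Set ℝ := fun n => if hn : n ∈ J then sets ⟨n, hn⟩ else Set.univ with hE
  have hEi : ∀ i : {x // x ∈ J}, E i.1 = sets i := by
    intro i; simp only [hE, i.2, dif_pos]
  have hEmeas : ∀ n ∈ s, MeasurableSet (E n) := by
    intro n hn
    rw [hs, Finset.mem_image] at hn
    obtain ⟨i, hi, rfl⟩ := hn
    rw [hEi i]
    exact hsets i hi
  have key := h s hsJ E hEmeas
  have h1 : (⋂ n ∈ s, f n ⁻¹' E n) = ⋂ i ∈ T, f i.1 ⁻¹' sets i := by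
    rw [hs, aux_biInter_image T (fun i => i.1) (fun n => f n ⁻¹' E n)]
    exact Set.iInter₂_congr fun i _ => by rw [hEi i]
  have h2 : (∏ n ∈ s, μ (f n ⁻¹' E n)) = ∏ i ∈ T, μ (f i.1 ⁻¹' sets i) := by
    rw [hs, Finset.prod_image (fun a _ b _ hab => Subtype.ext hab)]
    exact Finset.prod_congr rfl fun i _ => by rw [hEi i]
  rw [h1, h2] at key
  exact key

end Aux

/-- In the dyadic simulation tree (root distributed `X^{*U}`, `U = 2^m`), the
seed at node `i` of level `l` is `C l i = h^l(i)` where the per-level hash functions are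
`k`-wise independent and fresh (independent across levels and of the root). Each node is split
into two children determined by the parent's value and the seed, the parent being their sum,
and the split satisfying property (I) (children i.i.d. with the appropriate convolution-power
law). Then for every level `l`, any `k` of the `2^l` range-sums at level `l` are mutually
independent; in particular the `U` leaves `X_0, ..., X_{U-1}` are `k`-wise independent, each
with distribution `X`. -/
theorem stmt_15
    (Ω : Type*) [MeasureSpace Ω] [IsProbabilityMeasure (ℙ : Measure Ω)]
    (ν : Measure ℝ) [IsProbabilityMeasure ν]
    (m k : ℕ) (hm : 0 < m) (hk : 2 ≤ k)
    (S : ℕ → ℕ → Ω → ℝ) (C : ℕ → ℕ → Ω → ℝ)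
    (θ : ℕ → ℝ → ℝ → ℝ)
    (hSmeas : ∀ l i, Measurable (S l i)) (hCmeas : ∀ l i, Measurable (C l i))
    (hθmeas : ∀ l, Measurable (Function.uncurry (θ l)))
    -- the root has distribution X^{*U}
    (hroot : Measure.map (S 0 0) ℙ = convPow ν (2 ^ m))
    -- within each level, the seeds (hash values of a k-wise independent hash) are
    -- k-wise independent
    (hkwise : ∀ l (J : Finset ℕ), J.card ≤ k →
      iIndepFun (fun j : J => C l j.1) ℙ)
    -- the per-level hash functions are independent across levels
    (hlevels : iIndepFun
      (fun l : ℕ => fun ω (i : ℕ) => C l i ω) ℙ)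
    -- and the seeds are independent of the root
    (hrootindep : IndepFun (S 0 0) (fun ω (p : ℕ × ℕ) => C p.1 p.2 ω) ℙ)
    -- each left child is a deterministic function of the parent's value and the seed
    (hsplitL : ∀ l i, l < m → i < 2 ^ l →
      S (l + 1) (2 * i) = fun ω => θ l (C l i ω) (S l i ω))
    -- the parent is the sum of its two children
    (hsplitR : ∀ l i, l < m → i < 2 ^ l →
      S (l + 1) (2 * i + 1) = S l i - S (l + 1) (2 * i))
    -- property (I): the two children of each node are i.i.d. with distribution
    -- X^{*(U/2^{l+1})}
    (hI : ∀ l i, l < m → i < 2 ^ l →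
      IndepFun (S (l + 1) (2 * i)) (S (l + 1) (2 * i + 1)) ℙ ∧
      Measure.map (S (l + 1) (2 * i)) ℙ = convPow ν (2 ^ (m - (l + 1))) ∧
      Measure.map (S (l + 1) (2 * i + 1)) ℙ = convPow ν (2 ^ (m - (l + 1)))) :
    (∀ l, l ≤ m → ∀ J : Finset ℕ, (∀ j ∈ J, j < 2 ^ l) → J.card ≤ k →
      iIndepFun (fun j : J => S l j.1) ℙ) ∧
    (∀ i, i < 2 ^ m → Measure.map (S m i) ℙ = ν) := by
  classical
  -- σ-algebras
  set D : ℕ → MeasurableSpace Ω := fun l =>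
    MeasurableSpace.comap (fun ω (i : ℕ) => C l i ω) inferInstance with hD
  set A : ℕ → MeasurableSpace Ω := fun l =>
    MeasurableSpace.comap (S 0 0) inferInstance ⊔ ⨆ l' ∈ Set.Iio l, D l' with hA
  have hseedmeas : ∀ l, Measurable (fun ω (i : ℕ) => C l i ω) := fun l =>
    measurable_pi_lambda _ (fun i => hCmeas l i)
  have hD_le : ∀ l, D l ≤ (inferInstance : MeasurableSpace Ω) := fun l =>
    (hseedmeas l).comap_le
  have hA_le : ∀ l, A l ≤ (inferInstance : MeasurableSpace Ω) := fun l =>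
    sup_le (hSmeas 0 0).comap_le (iSup₂_le fun l' _ => hD_le l')
  have hC_measD : ∀ l i, Measurable[D l] (C l i) := fun l i =>
    aux_meas_comap (fun ω (i : ℕ) => C l i ω) (measurable_pi_apply i)
  have hA_mono : ∀ l, A l ≤ A (l + 1) := by
    intro l
    refine sup_le_sup_left ?_ _
    exact iSup_le fun l' => iSup_le fun hl' =>
      le_iSup₂ (f := fun l' (_ : l' ∈ Set.Iio (l+1)) => D l') l' (lt_trans hl' (Nat.lt_succ_self l))
  have hD_leA : ∀ l, D l ≤ A (l + 1) :=
    fun l => le_trans (le_iSup₂ (f := fun l' (_ : l' ∈ Set.Iio (l+1)) => D l') l (Nat.lt_succ_self l)) le_sup_right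
  -- measurability of S l i w.r.t. A l
  have hS_measA : ∀ l, l ≤ m → ∀ i, i < 2 ^ l → Measurable[A l] (S l i) := by
    intro l
    induction l with
    | zero =>
      intro _ i hi
      have : i = 0 := by omega
      subst this
      exact (aux_meas_comap (S 0 0) measurable_id).mono le_sup_left le_rfl
    | succ l ih =>
      intro hl i hi
      have hlm : l < m := hl
      set p := i / 2 with hp
      have hplt : p < 2 ^ l := by
        have h2 : 2 ^ (l + 1) = 2 * 2 ^ l := by ring
        omega
      have hSl : Measurable[A (l + 1)] (S l p) :=
        (ih (le_of_lt hlm) p hplt).mono (hA_mono l) le_rfl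
      have hCl : Measurable[A (l + 1)] (C l p) := (hC_measD l p).mono (hD_leA l) le_rfl
      have hleft : Measurable[A (l + 1)] (S (l + 1) (2 * p)) := by
        rw [hsplitL l p hlm hplt]
        exact (hθmeas l).comp (hCl.prodMk hSl)
      have hcases : i = 2 * p ∨ i = 2 * p + 1 := by omega
      rcases hcases with hc | hc
      · rw [hc]; exact hleft
      · rw [hc, hsplitR l p hlm hplt]
        exact hSl.sub hleft
  -- cross independence at each level
  have hcross : ∀ l, Indep (A l) (D l) ℙ := by
    intro l
    have h23 : Indep (⨆ l' ∈ Set.Iio l, D l') (D l) ℙ := by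
      have hdisj : Disjoint (Set.Iio l) ({l} : Set ℕ) := by
        rw [Set.disjoint_left]
        rintro x hx rfl
        simp at hx
      have := indep_iSup_of_disjoint (m := D) hD_le hlevels.iIndep hdisj
      simpa using this
    have hDsub : ∀ l', D l' ≤ MeasurableSpace.comap
        (fun ω (p : ℕ × ℕ) => C p.1 p.2 ω) inferInstance := by
      intro l'
      have hgm : Measurable (fun g : (ℕ × ℕ) → ℝ => fun i : ℕ => g (l', i)) :=
        measurable_pi_lambda _ (fun i => measurable_pi_apply (l', i))
      have h0 : D l' = MeasurableSpace.comap
          ((fun g : (ℕ × ℕ) → ℝ => fun i : ℕ => g (l', i)) ∘ (fun ω (p : ℕ × ℕ) => C p.1 p.2 ω))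
          inferInstance := rfl
      rw [h0, ← MeasurableSpace.comap_comp]
      exact MeasurableSpace.comap_mono hgm.comap_le
    have h12_3 : Indep (MeasurableSpace.comap (S 0 0) inferInstance)
        ((⨆ l' ∈ Set.Iio l, D l') ⊔ D l) ℙ := by
      rw [IndepFun_iff_Indep] at hrootindep
      exact aux_indep_mono hrootindep le_rfl
        (sup_le (iSup₂_le fun l' _ => hDsub l') (hDsub l))
    exact aux_indep_sup_left (hSmeas 0 0).comap_le (iSup₂_le fun l' _ => hD_le l')
      (hD_le l) h12_3 h23
  -- main induction (Q form)
  have MAIN : ∀ l, l ≤ m → ∀ J : Finset ℕ, (∀ j ∈ J, j < 2 ^ l) → J.card ≤ k →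
      ∀ E : ℕ → Set ℝ, (∀ j ∈ J, MeasurableSet (E j)) →
      ℙ (⋂ j ∈ J, S l j ⁻¹' E j) = ∏ j ∈ J, ℙ (S l j ⁻¹' E j) := by
    intro l
    induction l with
    | zero =>
      intro _ J hJ _ E hE
      have hJ0 : J ⊆ {0} := fun j hj => Finset.mem_singleton.2 (by have := hJ j hj; omega)
      rcases Finset.subset_singleton_iff.mp hJ0 with rfl | rfl
      · simp
      · simp
    | succ l ih =>
      intro hl1 J hJ hcard E hE
      have hlm : l < m := hl1
      have h2pow : 2 ^ (l + 1) = 2 * 2 ^ l := by ring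
      set P : Finset ℕ := J.image (fun j => j / 2) with hPdef
      have hPcard : P.card ≤ k := le_trans Finset.card_image_le hcard
      have hPel : ∀ p ∈ P, p < 2 ^ l := by
        intro p hp
        rw [hPdef, Finset.mem_image] at hp
        obtain ⟨j, hj, rfl⟩ := hp
        have := hJ j hj
        omega
      set Z : ℕ → Ω → ℝ × ℝ := fun p ω => (C l p ω, S l p ω) with hZdef
      -- independence of the pair σ-algebras over parents
      have hpairs : iIndep (fun p : P => MeasurableSpace.comap (Z p.1) inferInstance) ℙ := by
        refine iIndepSets.iIndep
          (fun p => ((hCmeas l p.1).prodMk (hSmeas l p.1)).comap_le)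
          (fun p : P => {t | ∃ A B : Set ℝ, MeasurableSet A ∧ MeasurableSet B ∧
            t = C l p.1 ⁻¹' A ∩ S l p.1 ⁻¹' B}) ?_ ?_ ?_
        · rintro p t1 ⟨A1, B1, hA1, hB1, rfl⟩ t2 ⟨A2, B2, hA2, hB2, rfl⟩ _
          exact ⟨A1 ∩ A2, B1 ∩ B2, hA1.inter hA2, hB1.inter hB2, by ext x; simp; tauto⟩
        · intro p
          rw [show (inferInstance : MeasurableSpace (ℝ × ℝ)) = MeasurableSpace.generateFrom
            (Set.image2 (· ×ˢ ·) {s : Set ℝ | MeasurableSet s} {t : Set ℝ | MeasurableSet t})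
            from generateFrom_prod.symm, MeasurableSpace.comap_generateFrom]
          congr 1
          ext t
          constructor
          · rintro ⟨u, hu, rfl⟩
            obtain ⟨A1, hA1, B1, hB1, rfl⟩ := hu
            exact ⟨A1, B1, hA1, hB1, (Set.mk_preimage_prod _ _).symm⟩
          · rintro ⟨A1, B1, hA1, hB1, rfl⟩
            exact ⟨A1 ×ˢ B1, Set.mem_image2_of_mem hA1 hB1, Set.mk_preimage_prod _ _⟩
        · rw [iIndepSets_iff]
          intro s F hF
          set Aset : P → Set ℝ := fun i => if h : i ∈ s then (hF i h).choose else Set.univ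
            with hAdef
          set Bset : P → Set ℝ := fun i => if h : i ∈ s then (hF i h).choose_spec.choose
            else Set.univ with hBdef
          have hspec : ∀ i ∈ s, MeasurableSet (Aset i) ∧ MeasurableSet (Bset i) ∧
              F i = C l i.1 ⁻¹' Aset i ∩ S l i.1 ⁻¹' Bset i := by
            intro i h
            simp only [hAdef, hBdef, dif_pos h]
            exact (hF i h).choose_spec.choose_spec
          have hsplit : ⋂ i ∈ s, F i =
              (⋂ i ∈ s, C l i.1 ⁻¹' Aset i) ∩ (⋂ i ∈ s, S l i.1 ⁻¹' Bset i) := by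
            ext ω
            simp only [Set.mem_iInter, Set.mem_inter_iff]
            constructor
            · intro h
              refine ⟨fun i hi => ?_, fun i hi => ?_⟩
              · have h2 := h i hi; rw [(hspec i hi).2.2] at h2; exact h2.1
              · have h2 := h i hi; rw [(hspec i hi).2.2] at h2; exact h2.2
            · rintro ⟨h1, h2⟩ i hi
              rw [(hspec i hi).2.2]
              exact ⟨h1 i hi, h2 i hi⟩
          have hx := (hcross l).symm
          rw [Indep_iff] at hx
          have hCmeasSet : MeasurableSet[D l] (⋂ i ∈ s, C l i.1 ⁻¹' Aset i) :=
            Finset.measurableSet_biInter s (fun i hi => hC_measD l i.1 (hspec i hi).1)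
          have hSmeasSet : MeasurableSet[A l] (⋂ i ∈ s, S l i.1 ⁻¹' Bset i) :=
            Finset.measurableSet_biInter s (fun i hi =>
              hS_measA l (le_of_lt hlm) i.1 (hPel i.1 i.2) (hspec i hi).2.1)
          have hCprod : ℙ (⋂ i ∈ s, C l i.1 ⁻¹' Aset i) = ∏ i ∈ s, ℙ (C l i.1 ⁻¹' Aset i) :=
            (hkwise l P hPcard).measure_inter_preimage_eq_mul s (fun i hi => (hspec i hi).1)
          have hSprod : ℙ (⋂ i ∈ s, S l i.1 ⁻¹' Bset i) = ∏ i ∈ s, ℙ (S l i.1 ⁻¹' Bset i) := by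
            set s' : Finset ℕ := s.image (fun i : P => i.1) with hs'def
            set B' : ℕ → Set ℝ := fun n => if h : n ∈ P then Bset ⟨n, h⟩ else Set.univ
              with hB'def
            have hBeq : ∀ i : P, B' i.1 = Bset i := by
              intro i; simp only [hB'def, i.2, dif_pos]
            have hs'P : s' ⊆ P := by
              intro n hn; rw [hs'def, Finset.mem_image] at hn
              obtain ⟨i, _, rfl⟩ := hn; exact i.2
            have hcard' : s'.card ≤ k := le_trans (Finset.card_le_card hs'P) hPcard
            have hmeas' : ∀ n ∈ s', MeasurableSet (B' n) := by
              intro n hn; rw [hs'def, Finset.mem_image] at hn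
              obtain ⟨i, hi, rfl⟩ := hn
              rw [hBeq i]; exact (hspec i hi).2.1
            have key := ih (le_of_lt hlm) s' (fun j hj => hPel j (hs'P hj)) hcard' B' hmeas'
            have h1 : (⋂ n ∈ s', S l n ⁻¹' B' n) = ⋂ i ∈ s, S l i.1 ⁻¹' Bset i := by
              rw [hs'def, aux_biInter_image s (fun i : P => i.1) (fun n => S l n ⁻¹' B' n)]
              exact Set.iInter₂_congr fun i _ => by rw [hBeq i]
            have h2 : (∏ n ∈ s', ℙ (S l n ⁻¹' B' n)) = ∏ i ∈ s, ℙ (S l i.1 ⁻¹' Bset i) := by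
              rw [hs'def, Finset.prod_image (fun a _ b _ hab => Subtype.ext hab)]
              exact Finset.prod_congr rfl fun i _ => by rw [hBeq i]
            rw [h1, h2] at key
            exact key
          calc ℙ (⋂ i ∈ s, F i)
              = ℙ ((⋂ i ∈ s, C l i.1 ⁻¹' Aset i) ∩ (⋂ i ∈ s, S l i.1 ⁻¹' Bset i)) := by
                rw [hsplit]
            _ = ℙ (⋂ i ∈ s, C l i.1 ⁻¹' Aset i) * ℙ (⋂ i ∈ s, S l i.1 ⁻¹' Bset i) :=
                hx _ _ hCmeasSet hSmeasSet
            _ = (∏ i ∈ s, ℙ (C l i.1 ⁻¹' Aset i)) * ∏ i ∈ s, ℙ (S l i.1 ⁻¹' Bset i) := by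
                rw [hCprod, hSprod]
            _ = ∏ i ∈ s, (ℙ (C l i.1 ⁻¹' Aset i) * ℙ (S l i.1 ⁻¹' Bset i)) := by
                rw [Finset.prod_mul_distrib]
            _ = ∏ i ∈ s, ℙ (F i) := by
                refine Finset.prod_congr rfl fun i hi => ?_
                rw [(hspec i hi).2.2]
                exact (hx _ _ (hC_measD l i.1 (hspec i hi).1)
                  (hS_measA l (le_of_lt hlm) i.1 (hPel i.1 i.2) (hspec i hi).2.1)).symm
      have hpairsQ := aux_iIndep_to_Q
        (m' := fun p => MeasurableSpace.comap (Z p) inferInstance) hpairs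
      set gL : ℝ × ℝ → ℝ := fun cs => θ l cs.1 cs.2 with hgLdef
      set gR : ℝ × ℝ → ℝ := fun cs => cs.2 - θ l cs.1 cs.2 with hgRdef
      have hgLmeas : Measurable gL := hθmeas l
      have hgRmeas : Measurable gR := measurable_snd.sub hgLmeas
      set F2 : ℕ → Set (ℝ × ℝ) := fun p =>
        (if 2 * p ∈ J then gL ⁻¹' E (2 * p) else Set.univ) ∩
        (if 2 * p + 1 ∈ J then gR ⁻¹' E (2 * p + 1) else Set.univ) with hF2def
      have hF2meas : ∀ p ∈ P, MeasurableSet (F2 p) := by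
        intro p hp
        refine MeasurableSet.inter ?_ ?_
        · split_ifs with h
          · exact hgLmeas (hE _ h)
          · exact MeasurableSet.univ
        · split_ifs with h
          · exact hgRmeas (hE _ h)
          · exact MeasurableSet.univ
      have hchildL : ∀ p, p < 2 ^ l → ∀ ω, S (l + 1) (2 * p) ω = gL (Z p ω) := by
        intro p hp ω
        rw [hsplitL l p hlm hp]
      have hchildR : ∀ p, p < 2 ^ l → ∀ ω, S (l + 1) (2 * p + 1) ω = gR (Z p ω) := by
        intro p hp ω
        have h1 : S (l + 1) (2 * p + 1) ω = S l p ω - S (l + 1) (2 * p) ω := by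
          rw [hsplitR l p hlm hp]; rfl
        rw [h1, hchildL p hp ω, hgLdef, hgRdef, hZdef]
      have hsets : (⋂ j ∈ J, S (l + 1) j ⁻¹' E j) = ⋂ p ∈ P, Z p ⁻¹' F2 p := by
        ext ω
        simp only [Set.mem_iInter, Set.mem_preimage, hF2def, Set.mem_inter_iff]
        constructor
        · intro h p hp
          refine ⟨?_, ?_⟩
          · by_cases h2 : 2 * p ∈ J
            · rw [if_pos h2]
              have h3 := h _ h2
              rwa [hchildL p (hPel p hp) ω] at h3
            · rw [if_neg h2]; trivial
          · by_cases h2 : 2 * p + 1 ∈ J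
            · rw [if_pos h2]
              have h3 := h _ h2
              rwa [hchildR p (hPel p hp) ω] at h3
            · rw [if_neg h2]; trivial
        · intro h j hj
          have hpj : j / 2 ∈ P := Finset.mem_image_of_mem _ hj
          obtain ⟨h1, h2⟩ := h _ hpj
          rcases (by omega : j = 2 * (j / 2) ∨ j = 2 * (j / 2) + 1) with hc | hc
          · rw [if_pos (hc ▸ hj)] at h1
            rw [hc, hchildL (j / 2) (hPel _ hpj) ω]
            exact h1
          · rw [if_pos (hc ▸ hj)] at h2
            rw [hc, hchildR (j / 2) (hPel _ hpj) ω]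
            exact h2
      have hQ := hpairsQ P (subset_refl P) (fun p => Z p ⁻¹' F2 p)
        (fun p hp => ⟨F2 p, hF2meas p hp, rfl⟩)
      rw [hsets, hQ]
      rw [← Finset.prod_fiberwise_of_maps_to
        (fun j hj => Finset.mem_image_of_mem (fun j => j / 2) hj)
        (fun j => ℙ (S (l + 1) j ⁻¹' E j))]
      refine Finset.prod_congr rfl fun p hp => ?_
      show ℙ (Z p ⁻¹' F2 p) = ∏ j ∈ J.filter (fun j => j / 2 = p), ℙ (S (l + 1) j ⁻¹' E j)
      have hplt := hPel p hp
      have hiL : Z p ⁻¹' (gL ⁻¹' E (2 * p)) = S (l + 1) (2 * p) ⁻¹' E (2 * p) := by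
        ext ω; simp [Set.mem_preimage, hchildL p hplt ω]
      have hiR : Z p ⁻¹' (gR ⁻¹' E (2 * p + 1)) = S (l + 1) (2 * p + 1) ⁻¹' E (2 * p + 1) := by
        ext ω; simp [Set.mem_preimage, hchildR p hplt ω]
      by_cases hL : 2 * p ∈ J <;> by_cases hR : 2 * p + 1 ∈ J
      · have hfil : J.filter (fun j => j / 2 = p) = {2 * p, 2 * p + 1} := by
          ext j
          simp only [Finset.mem_filter, Finset.mem_insert, Finset.mem_singleton]
          constructor
          · rintro ⟨hjJ, hj2⟩; omega
          · rintro (rfl | rfl)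
            · exact ⟨hL, by omega⟩
            · exact ⟨hR, by omega⟩
        have hF2eq : Z p ⁻¹' F2 p =
            S (l + 1) (2 * p) ⁻¹' E (2 * p) ∩ S (l + 1) (2 * p + 1) ⁻¹' E (2 * p + 1) := by
          simp only [hF2def]
          rw [if_pos hL, if_pos hR, Set.preimage_inter, hiL, hiR]
        rw [hfil, hF2eq, (hI l p hlm hplt).1.measure_inter_preimage_eq_mul _ _ (hE _ hL) (hE _ hR),
          Finset.prod_pair (by omega : 2 * p ≠ 2 * p + 1)]
      · have hfil : J.filter (fun j => j / 2 = p) = {2 * p} := by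
          ext j
          simp only [Finset.mem_filter, Finset.mem_singleton]
          constructor
          · rintro ⟨hjJ, hj2⟩
            rcases (by omega : j = 2 * p ∨ j = 2 * p + 1) with rfl | rfl
            · rfl
            · exact absurd hjJ hR
          · rintro rfl; exact ⟨hL, by omega⟩
        have hF2eq : Z p ⁻¹' F2 p = S (l + 1) (2 * p) ⁻¹' E (2 * p) := by
          simp only [hF2def]
          rw [if_pos hL, if_neg hR, Set.inter_univ, hiL]
        rw [hfil, hF2eq, Finset.prod_singleton]
      · have hfil : J.filter (fun j => j / 2 = p) = {2 * p + 1} := by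
          ext j
          simp only [Finset.mem_filter, Finset.mem_singleton]
          constructor
          · rintro ⟨hjJ, hj2⟩
            rcases (by omega : j = 2 * p ∨ j = 2 * p + 1) with rfl | rfl
            · exact absurd hjJ hL
            · rfl
          · rintro rfl; exact ⟨hR, by omega⟩
        have hF2eq : Z p ⁻¹' F2 p = S (l + 1) (2 * p + 1) ⁻¹' E (2 * p + 1) := by
          simp only [hF2def]
          rw [if_neg hL, if_pos hR, Set.univ_inter, hiR]
        rw [hfil, hF2eq, Finset.prod_singleton]
      · have hfil : J.filter (fun j => j / 2 = p) = ∅ := by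
          ext j
          simp only [Finset.mem_filter, Finset.notMem_empty, iff_false, not_and]
          intro hjJ hj2
          rcases (by omega : j = 2 * p ∨ j = 2 * p + 1) with rfl | rfl
          · exact hL hjJ
          · exact hR hjJ
        have hF2eq : Z p ⁻¹' F2 p = Set.univ := by
          simp only [hF2def]
          rw [if_neg hL, if_neg hR]; simp
        rw [hfil, hF2eq, Finset.prod_empty]
        exact measure_univ
  refine ⟨?_, ?_⟩
  · intro l hl J hJ hcard
    exact aux_Q_to_subtype (fun s hs E hE =>
      MAIN l hl s (fun j hj => hJ j (hs hj)) (le_trans (Finset.card_le_card hs) hcard) E hE)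
  · intro i hi
    have hm' : m - 1 + 1 = m := Nat.succ_pred_eq_of_pos hm
    have h2 : 2 ^ m = 2 * 2 ^ (m - 1) := by
      conv_lhs => rw [← hm']
      ring
    have hplt : i / 2 < 2 ^ (m - 1) := by omega
    obtain ⟨_, hL, hR⟩ := hI (m - 1) (i / 2) (by omega) hplt
    rw [hm'] at hL hR
    rw [Nat.sub_self, pow_zero, convPow_one] at hL hR
    rcases (by omega : i = 2 * (i / 2) ∨ i = 2 * (i / 2) + 1) with hc | hc
    · rw [hc]; exact hL
    · rw [hc]; exact hR
end

section
/- In the dyadic simulation tree built with 2-wise independent hash functions at every level, for any 0 ≤ a ≤ b < U the range-sum S[a,b) = X_a + X_{a+1} + ... + X_{b−1} has marginal distribution exactly X^{*(b−a)}. -/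
open MeasureTheory ProbabilityTheory

section Aux

variable {α β γ δ : Type*} [MeasurableSpace α] [MeasurableSpace β] [MeasurableSpace γ]
  [MeasurableSpace δ]

lemma shuffle_map (μa : Measure α) (μb : Measure β) (μc : Measure γ) (μd : Measure δ)
    [SFinite μa] [SFinite μb] [SFinite μc] [SFinite μd] :
    Measure.map (fun p : (α × β) × (γ × δ) => ((p.1.1, p.2.1), (p.1.2, p.2.2)))
      ((μa.prod μb).prod (μc.prod μd)) = (μa.prod μc).prod (μb.prod μd) := by
  have hg : MeasurePreserving
      (fun q : β × γ × δ => (q.2.1, (q.1, q.2.2)))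
      (μb.prod (μc.prod μd)) (μc.prod (μb.prod μd)) := by
    have h1 := (measurePreserving_prodAssoc μb μc μd).symm MeasurableEquiv.prodAssoc
    have h2 : MeasurePreserving (Prod.map (Prod.swap : β × γ → γ × β) (id : δ → δ))
        ((μb.prod μc).prod μd) ((μc.prod μb).prod μd) :=
      Measure.measurePreserving_swap.prod (MeasurePreserving.id μd)
    have h3 := measurePreserving_prodAssoc μc μb μd
    exact h3.comp (h2.comp h1)
  have hF : MeasurePreserving
      (fun p : (α × β) × (γ × δ) => ((p.1.1, p.2.1), (p.1.2, p.2.2)))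
      ((μa.prod μb).prod (μc.prod μd)) ((μa.prod μc).prod (μb.prod μd)) := by
    have h1 := measurePreserving_prodAssoc μa μb (μc.prod μd)
    have h2 := (MeasurePreserving.id μa).prod hg
    have h3 := (measurePreserving_prodAssoc μa μc (μb.prod μd)).symm MeasurableEquiv.prodAssoc
    exact h3.comp (h2.comp h1)
  exact hF.map_eq

lemma indepFun_pair_left {Ω : Type*} [MeasurableSpace Ω] {μ : Measure Ω} [IsProbabilityMeasure μ]
    {X : Ω → α} {Y : Ω → β} {Z : Ω → γ}
    (hX : Measurable X) (hY : Measurable Y) (hZ : Measurable Z)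
    (h1 : IndepFun X (fun ω => (Y ω, Z ω)) μ) (h2 : IndepFun Y Z μ) :
    IndepFun (fun ω => (X ω, Y ω)) Z μ := by
  have hXY : IndepFun X Y μ := h1.comp measurable_id measurable_fst
  haveI := Measure.isProbabilityMeasure_map (μ := μ) hX.aemeasurable
  haveI := Measure.isProbabilityMeasure_map (μ := μ) hY.aemeasurable
  haveI := Measure.isProbabilityMeasure_map (μ := μ) hZ.aemeasurable
  rw [indepFun_iff_map_prod_eq_prod_map_map ((hX.prodMk hY).aemeasurable) hZ.aemeasurable]
  have e : (fun ω => ((X ω, Y ω), Z ω))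
      = (fun p : α × β × γ => ((p.1, p.2.1), p.2.2)) ∘ (fun ω => (X ω, (Y ω, Z ω))) := rfl
  have hmp : Measurable (fun p : α × β × γ => ((p.1, p.2.1), p.2.2)) := by fun_prop
  rw [e, ← Measure.map_map hmp (hX.prodMk (hY.prodMk hZ)),
    (indepFun_iff_map_prod_eq_prod_map_map hX.aemeasurable ((hY.prodMk hZ).aemeasurable)).1 h1,
    (indepFun_iff_map_prod_eq_prod_map_map hY.aemeasurable hZ.aemeasurable).1 h2,
    (indepFun_iff_map_prod_eq_prod_map_map hX.aemeasurable hY.aemeasurable).1 hXY]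
  exact ((measurePreserving_prodAssoc (μ.map X) (μ.map Y) (μ.map Z)).symm
    MeasurableEquiv.prodAssoc).map_eq

lemma indepFun_reshuffle {Ω : Type*} [MeasurableSpace Ω] {μ : Measure Ω} [IsProbabilityMeasure μ]
    {X : Ω → α} {Y : Ω → β} {U : Ω → γ} {V : Ω → δ}
    (hX : Measurable X) (hY : Measurable Y) (hU : Measurable U) (hV : Measurable V)
    (hXY : IndepFun X Y μ) (hUV : IndepFun U V μ)
    (hbig : IndepFun (fun ω => (X ω, Y ω)) (fun ω => (U ω, V ω)) μ) :
    IndepFun (fun ω => (X ω, U ω)) (fun ω => (Y ω, V ω)) μ := by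
  have hXU : IndepFun X U μ := hbig.comp measurable_fst measurable_fst
  have hYV : IndepFun Y V μ := hbig.comp measurable_snd measurable_snd
  haveI := Measure.isProbabilityMeasure_map (μ := μ) hX.aemeasurable
  haveI := Measure.isProbabilityMeasure_map (μ := μ) hY.aemeasurable
  haveI := Measure.isProbabilityMeasure_map (μ := μ) hU.aemeasurable
  haveI := Measure.isProbabilityMeasure_map (μ := μ) hV.aemeasurable
  rw [indepFun_iff_map_prod_eq_prod_map_map ((hX.prodMk hU).aemeasurable)
    ((hY.prodMk hV).aemeasurable)]
  have e : (fun ω => ((X ω, U ω), (Y ω, V ω)))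
      = (fun p : (α × β) × (γ × δ) => ((p.1.1, p.2.1), (p.1.2, p.2.2)))
        ∘ (fun ω => ((X ω, Y ω), (U ω, V ω))) := rfl
  have hmp : Measurable (fun p : (α × β) × (γ × δ) => ((p.1.1, p.2.1), (p.1.2, p.2.2))) := by
    fun_prop
  rw [e, ← Measure.map_map hmp ((hX.prodMk hY).prodMk (hU.prodMk hV)),
    (indepFun_iff_map_prod_eq_prod_map_map ((hX.prodMk hY).aemeasurable)
      ((hU.prodMk hV).aemeasurable)).1 hbig,
    (indepFun_iff_map_prod_eq_prod_map_map hX.aemeasurable hY.aemeasurable).1 hXY,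
    (indepFun_iff_map_prod_eq_prod_map_map hU.aemeasurable hV.aemeasurable).1 hUV,
    shuffle_map,
    ← (indepFun_iff_map_prod_eq_prod_map_map hX.aemeasurable hU.aemeasurable).1 hXU,
    ← (indepFun_iff_map_prod_eq_prod_map_map hY.aemeasurable hV.aemeasurable).1 hYV]

lemma measurable_finSum (n : ℕ) : Measurable (fun x : Fin n → ℝ => ∑ i, x i) :=
  Finset.measurable_sum _ (fun i _ => measurable_pi_apply i)

instance convPow_prob (ν : Measure ℝ) [IsProbabilityMeasure ν] (n : ℕ) :
    IsProbabilityMeasure (convPow ν n) :=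
  Measure.isProbabilityMeasure_map (measurable_finSum n).aemeasurable

lemma convPow_zero (ν : Measure ℝ) [IsProbabilityMeasure ν] :
    convPow ν 0 = Measure.dirac 0 := by
  unfold convPow
  have h : (fun x : Fin 0 → ℝ => ∑ i, x i) = fun _ => (0 : ℝ) := by
    funext x; simp
  rw [h, Measure.map_const]
  simp

lemma convPow_pair (ν : Measure ℝ) [IsProbabilityMeasure ν] (p q : ℕ) :
    Measure.map (fun x : ℝ × ℝ => x.1 + x.2) ((convPow ν p).prod (convPow ν q))
      = convPow ν (p + q) := by
  unfold convPow
  rw [Measure.map_prod_map _ _ (measurable_finSum p) (measurable_finSum q),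
    Measure.map_map measurable_add ((measurable_finSum p).prodMap (measurable_finSum q))]
  have h1 := (measurePreserving_piCongrLeft (fun _ : Fin (p + q) => ν) finSumFinEquiv).map_eq
  have h2 := (measurePreserving_sumPiEquivProdPi_symm
    (fun _ : Fin p ⊕ Fin q => ν)).map_eq
  rw [← h1, ← h2, Measure.map_map (measurable_finSum (p+q))
      (MeasurableEquiv.piCongrLeft (fun _ => ℝ) finSumFinEquiv).measurable,
    Measure.map_map ((measurable_finSum (p+q)).comp
      (MeasurableEquiv.piCongrLeft (fun _ => ℝ) finSumFinEquiv).measurable)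
      (MeasurableEquiv.sumPiEquivProdPi (fun _ => ℝ)).symm.measurable]
  congr 1
  funext y
  simp only [Function.comp_apply]
  have : ∀ z : (Fin p ⊕ Fin q) → ℝ,
      (∑ i, (MeasurableEquiv.piCongrLeft (fun _ => ℝ) finSumFinEquiv) z i) = ∑ j, z j := by
    intro z
    refine (Fintype.sum_equiv finSumFinEquiv _ _ ?_).symm
    intro j
    rw [MeasurableEquiv.piCongrLeft_apply_apply]
  rw [this]
  rw [Fintype.sum_sum_type]
  rfl

lemma map_add_convPow {Ω : Type*} [MeasureSpace Ω] [IsProbabilityMeasure (ℙ : Measure Ω)]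
    (ν : Measure ℝ) [IsProbabilityMeasure ν]
    {X Y : Ω → ℝ} (hX : Measurable X) (hY : Measurable Y) {p q : ℕ}
    (hXl : Measure.map X ℙ = convPow ν p) (hYl : Measure.map Y ℙ = convPow ν q)
    (hind : IndepFun X Y ℙ) :
    Measure.map (fun ω => X ω + Y ω) ℙ = convPow ν (p + q) := by
  have e : (fun ω => X ω + Y ω) = (fun x : ℝ × ℝ => x.1 + x.2) ∘ (fun ω => (X ω, Y ω)) := rfl
  rw [e, ← Measure.map_map measurable_add (hX.prodMk hY),
    (indepFun_iff_map_prod_eq_prod_map_map hX.aemeasurable hY.aemeasurable).1 hind, hXl, hYl]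
  exact convPow_pair ν p q

end Aux

/-- In the dyadic simulation tree built with 2-wise independent hash functions
at every level (seeds 2-wise independent within each level, fresh across levels and
independent of the root; splits deterministic in parent value and seed, parent the sum of its
children, property (I) holding), for any `0 ≤ a ≤ b < U` the range-sum
`S[a,b) = X_a + ... + X_{b-1}` has marginal distribution exactly `X^{*(b-a)}`. -/
theorem stmt_16
    (Ω : Type*) [MeasureSpace Ω] [IsProbabilityMeasure (ℙ : Measure Ω)]
    (ν : Measure ℝ) [IsProbabilityMeasure ν]
    (m : ℕ) (hm : 0 < m)
    (S : ℕ → ℕ → Ω → ℝ) (C : ℕ → ℕ → Ω → ℝ)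
    (θ : ℕ → ℝ → ℝ → ℝ)
    (hSmeas : ∀ l i, Measurable (S l i)) (hCmeas : ∀ l i, Measurable (C l i))
    (hθmeas : ∀ l, Measurable (Function.uncurry (θ l)))
    -- the root has distribution X^{*U}
    (hroot : Measure.map (S 0 0) ℙ = convPow ν (2 ^ m))
    -- within each level, the seeds (hash values of a k-wise independent hash) are
    -- k-wise independent
    (hkwise : ∀ l (J : Finset ℕ), J.card ≤ 2 →
      iIndepFun (fun j : J => C l j.1) ℙ)
    -- the per-level hash functions are independent across levels
    (hlevels : iIndepFun
      (fun l : ℕ => fun ω (i : ℕ) => C l i ω) ℙ)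
    -- and the seeds are independent of the root
    (hrootindep : IndepFun (S 0 0) (fun ω (p : ℕ × ℕ) => C p.1 p.2 ω) ℙ)
    -- each left child is a deterministic function of the parent's value and the seed
    (hsplitL : ∀ l i, l < m → i < 2 ^ l →
      S (l + 1) (2 * i) = fun ω => θ l (C l i ω) (S l i ω))
    -- the parent is the sum of its two children
    (hsplitR : ∀ l i, l < m → i < 2 ^ l →
      S (l + 1) (2 * i + 1) = S l i - S (l + 1) (2 * i))
    -- property (I): the two children of each node are i.i.d. with distribution
    -- X^{*(U/2^{l+1})}
    (hI : ∀ l i, l < m → i < 2 ^ l →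
      IndepFun (S (l + 1) (2 * i)) (S (l + 1) (2 * i + 1)) ℙ ∧
      Measure.map (S (l + 1) (2 * i)) ℙ = convPow ν (2 ^ (m - (l + 1))) ∧
      Measure.map (S (l + 1) (2 * i + 1)) ℙ = convPow ν (2 ^ (m - (l + 1)))) :
    ∀ a b : ℕ, a ≤ b → b < 2 ^ m →
      Measure.map (fun ω => ∑ i ∈ Finset.Ico a b, S m i ω) ℙ = convPow ν (b - a) := by
  
  have hsum_meas : ∀ a b : ℕ, Measurable (fun ω => ∑ j ∈ Finset.Ico a b, S m j ω) :=
    fun a b => Finset.measurable_sum _ (fun j _ => hSmeas m j)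
  have key_div : ∀ (x i e : ℕ), i * 2 ^ e ≤ x → x < (i + 1) * 2 ^ e → x / 2 ^ e = i :=
    fun x i e h1 h2 => Nat.div_eq_of_lt_le h1 h2
  -- tree sum: every node is the sum of the leaves below it
  have treesum : ∀ d l i, l + d = m → i < 2 ^ l → ∀ ω,
      S l i ω = ∑ j ∈ Finset.Ico (i * 2 ^ d) ((i + 1) * 2 ^ d), S m j ω := by
    intro d
    induction d with
    | zero =>
      intro l i hl hi ω
      have hlm : l = m := by omega
      subst hlm
      simp
    | succ d ih =>
      intro l i hl hi ω
      have hlm : l < m := by omega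
      have h2i : 2 * i < 2 ^ (l + 1) := by rw [pow_succ]; omega
      have h2i1 : 2 * i + 1 < 2 ^ (l + 1) := by rw [pow_succ]; omega
      have h1 : S (l + 1) (2 * i) ω + S (l + 1) (2 * i + 1) ω = S l i ω := by
        have h := congrFun (hsplitR l i hlm hi) ω
        simp only [Pi.sub_apply] at h
        rw [h]; ring
      have e1 := ih (l + 1) (2 * i) (by omega) h2i ω
      have e2 := ih (l + 1) (2 * i + 1) (by omega) h2i1 ω
      have ea : i * 2 ^ (d + 1) = 2 * i * 2 ^ d := by ring
      have eb : (i + 1) * 2 ^ (d + 1) = (2 * i + 1 + 1) * 2 ^ d := by ring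
      rw [ea, eb, ← Finset.sum_Ico_consecutive _
        (by nlinarith [(Nat.pow_pos (by norm_num : 0 < 2) : 0 < 2 ^ d)] :
          2 * i * 2 ^ d ≤ (2 * i + 1) * 2 ^ d)
        (by nlinarith [(Nat.pow_pos (by norm_num : 0 < 2) : 0 < 2 ^ d)] :
          (2 * i + 1) * 2 ^ d ≤ (2 * i + 1 + 1) * 2 ^ d),
        ← e1, ← e2, h1]
  
  -- measurable full-level seed vectors
  have hmeasvec : ∀ l : ℕ, Measurable (fun ω => fun i : ℕ => C l i ω) :=
    fun l => measurable_pi_lambda _ (fun i => hCmeas l i)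
  -- the "base" random element: root value together with all seeds below level n
  have hBmeas : ∀ n : ℕ, Measurable
      (fun ω => (S 0 0 ω, fun k j => if k < n then C k j ω else (0 : ℝ))) := by
    intro n
    refine (hSmeas 0 0).prodMk ?_
    refine measurable_pi_lambda _ (fun k => measurable_pi_lambda _ (fun j => ?_))
    by_cases h : k < n
    · simpa [h] using hCmeas k j
    · simpa [h] using measurable_const
  have htruncmeas : ∀ n : ℕ,
      Measurable (fun ω => fun k j => if k < n then C k j ω else (0 : ℝ)) := by
    intro n
    refine measurable_pi_lambda _ (fun k => measurable_pi_lambda _ (fun j => ?_))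
    by_cases h : k < n
    · simpa [h] using hCmeas k j
    · simpa [h] using measurable_const
  have B_indep : ∀ n : ℕ, IndepFun
      (fun ω => (S 0 0 ω, fun k j => if k < n then C k j ω else (0 : ℝ)))
      (fun ω => fun j : ℕ => C n j ω) ℙ := by
    intro n
    have htrunc : IndepFun (fun ω => fun k j => if k < n then C k j ω else (0 : ℝ))
        (fun ω => fun j : ℕ => C n j ω) ℙ := by
      have hfin := hlevels.indepFun_finset (Finset.range n) {n}
        (by simp [Finset.disjoint_left]; omega) hmeasvec
      have hφ : Measurable (fun v : (i : (Finset.range n : Finset ℕ)) → (ℕ → ℝ) =>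
          fun k j => if h : k < n then v ⟨k, Finset.mem_range.mpr h⟩ j else (0 : ℝ)) := by
        refine measurable_pi_lambda _ (fun k => measurable_pi_lambda _ (fun j => ?_))
        by_cases h : k < n
        · simpa [h, Function.comp_def] using (measurable_pi_apply j).comp
            (measurable_pi_apply (⟨k, Finset.mem_range.mpr h⟩ : (Finset.range n : Finset ℕ)))
        · simpa [h] using measurable_const
      have hψ : Measurable (fun v : (i : ({n} : Finset ℕ)) → (ℕ → ℝ) =>
          v ⟨n, Finset.mem_singleton_self n⟩) := measurable_pi_apply _
      have h := hfin.comp hφ hψ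
      exact h
    have h1 : IndepFun (S 0 0)
        (fun ω => ((fun k j => if k < n then C k j ω else (0 : ℝ)),
          (fun j : ℕ => C n j ω))) ℙ := by
      have hg : Measurable (fun F : ℕ × ℕ → ℝ =>
          ((fun k j => if k < n then F (k, j) else (0 : ℝ)), (fun j : ℕ => F (n, j)))) := by
        refine Measurable.prodMk ?_ ?_
        · refine measurable_pi_lambda _ (fun k => measurable_pi_lambda _ (fun j => ?_))
          by_cases h : k < n
          · simpa [h] using measurable_pi_apply (k, j)
          · simpa [h] using measurable_const
        · exact measurable_pi_lambda _ (fun j => measurable_pi_apply (n, j))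
      have h := hrootindep.comp measurable_id hg
      exact h
    exact indepFun_pair_left (hSmeas 0 0) (htruncmeas n) (hmeasvec n) h1 htrunc
  -- every node value is a measurable function of the base element
  have hrep : ∀ n l, l ≤ n → l ≤ m → ∀ i, i < 2 ^ l →
      ∃ G : ℝ × (ℕ → ℕ → ℝ) → ℝ, Measurable G ∧
        ∀ ω, S l i ω = G (S 0 0 ω, fun k j => if k < n then C k j ω else (0 : ℝ)) := by
    intro n l
    induction l with
    | zero =>
      intro _ _ i hi
      have : i = 0 := by omega
      subst this
      exact ⟨Prod.fst, measurable_fst, fun ω => rfl⟩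
    | succ l ih =>
      intro hln hlm i hi
      have hln' : l < n := by omega
      have hlm' : l < m := by omega
      have hi2 : i / 2 < 2 ^ l := by rw [pow_succ] at hi; omega
      obtain ⟨G, hG, hGe⟩ := ih (by omega) (by omega) (i / 2) hi2
      have hGL : ∃ G' : ℝ × (ℕ → ℕ → ℝ) → ℝ, Measurable G' ∧
          ∀ ω, S (l + 1) (2 * (i / 2)) ω
            = G' (S 0 0 ω, fun k j => if k < n then C k j ω else (0 : ℝ)) := by
        refine ⟨fun p => θ l (p.2 l (i / 2)) (G p), ?_, ?_⟩
        · exact (hθmeas l).comp ((((measurable_pi_apply (i / 2)).comp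
            ((measurable_pi_apply l).comp measurable_snd))).prodMk hG)
        · intro ω
          have h := congrFun (hsplitL l (i / 2) hlm' hi2) ω
          rw [h]
          simp only [hln', if_pos]
          rw [hGe ω]
      rcases Nat.mod_two_eq_zero_or_one i with h2 | h2
      · obtain ⟨G', hG', he⟩ := hGL
        exact ⟨G', hG', fun ω => by rw [show i = 2 * (i / 2) by omega]; exact he ω⟩
      · obtain ⟨G', hG', he⟩ := hGL
        refine ⟨fun p => G p - G' p, hG.sub hG', fun ω => ?_⟩
        rw [show i = 2 * (i / 2) + 1 by omega]
        have h := congrFun (hsplitR l (i / 2) hlm' hi2) ω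
        simp only [Pi.sub_apply] at h
        rw [h, hGe ω, he ω]
  
  -- measurable helper pieces for the boundary representations
  have hθp : ∀ l : ℕ, Measurable (fun p : ℝ × (ℕ → ℝ) => θ l (p.2 l) p.1) := by
    intro l
    have e : (fun p : ℝ × (ℕ → ℝ) => θ l (p.2 l) p.1)
        = Function.uncurry (θ l) ∘ (fun p : ℝ × (ℕ → ℝ) => (p.2 l, p.1)) := rfl
    rw [e]
    exact (hθmeas l).comp ((((measurable_pi_apply l)).comp
      (measurable_snd : Measurable (Prod.snd : ℝ × (ℕ → ℝ) → ℕ → ℝ))).prodMk measurable_fst)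
  have hzerol : ∀ l : ℕ, Measurable (fun p : ℝ × (ℕ → ℝ) =>
      fun k => if k = l then (0 : ℝ) else p.2 k) := by
    intro l
    refine measurable_pi_lambda _ (fun k => ?_)
    by_cases hk : k = l
    · simpa [hk] using measurable_const
    · simpa [hk, Function.comp_def] using (measurable_pi_apply k).comp
        (measurable_snd : Measurable (Prod.snd : ℝ × (ℕ → ℝ) → ℕ → ℝ))
  -- suffix sums of a subtree are functions of the node value and one seed per level
  have hsuf : ∀ d l i a, l + d = m → i < 2 ^ l → i * 2 ^ d ≤ a → a ≤ (i + 1) * 2 ^ d →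
      ∃ f : ℝ × (ℕ → ℝ) → ℝ, Measurable f ∧ ∀ ω,
        (∑ j ∈ Finset.Ico a ((i + 1) * 2 ^ d), S m j ω)
          = f (S l i ω, fun k => if l ≤ k ∧ k < m then C k (a / 2 ^ (m - k)) ω else 0) := by
    intro d
    induction d with
    | zero =>
      intro l i a hl hi ha1 ha2
      simp only [pow_zero, mul_one] at ha1 ha2 ⊢
      rcases Nat.eq_or_lt_of_le ha2 with h | h
      · exact ⟨fun _ => 0, measurable_const, fun ω => by rw [h]; simp⟩
      · have ha : a = i := by omega
        subst ha
        refine ⟨Prod.fst, measurable_fst, fun ω => ?_⟩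
        have hlm : l = m := by omega
        subst hlm
        rw [Nat.Ico_succ_singleton, Finset.sum_singleton]
    | succ d ih =>
      intro l i a hl hi ha1 ha2
      have hlm : l < m := by omega
      have h2i : 2 * i < 2 ^ (l + 1) := by rw [pow_succ]; omega
      have h2i1 : 2 * i + 1 < 2 ^ (l + 1) := by rw [pow_succ]; omega
      have ea : i * 2 ^ (d + 1) = 2 * i * 2 ^ d := by ring
      have eb : (i + 1) * 2 ^ (d + 1) = (2 * i + 1 + 1) * 2 ^ d := by ring
      have hpow : 0 < 2 ^ d := Nat.pow_pos (by norm_num)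
      rcases Nat.eq_or_lt_of_le ha2 with hA | hA
      · exact ⟨fun _ => 0, measurable_const, fun ω => by rw [hA]; simp⟩
      have hdiv : a / 2 ^ (d + 1) = i := key_div a i (d + 1) ha1 hA
      have hmk : m - l = d + 1 := by omega
      have hwl : ∀ ω, (if l ≤ l ∧ l < m then C l (a / 2 ^ (m - l)) ω else 0) = C l i ω := by
        intro ω
        rw [if_pos ⟨le_refl l, hlm⟩, hmk, hdiv]
      rcases le_or_gt ((2 * i + 1) * 2 ^ d) a with hmid | hmid
      · -- the range lies entirely in the right child
        obtain ⟨f, hf, hfe⟩ := ih (l + 1) (2 * i + 1) a (by omega) h2i1 hmid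
          (by rw [← eb]; omega)
        refine ⟨fun p => f (p.1 - θ l (p.2 l) p.1, fun k => if k = l then 0 else p.2 k),
          (hf.comp ((measurable_fst.sub (hθp l)).prodMk (hzerol l))), fun ω => ?_⟩
        rw [eb, hfe ω]
        have hval : S (l + 1) (2 * i + 1) ω
            = S l i ω - θ l (if l ≤ l ∧ l < m then C l (a / 2 ^ (m - l)) ω else 0) (S l i ω) := by
          rw [hwl ω]
          have hR := congrFun (hsplitR l i hlm hi) ω
          have hL := congrFun (hsplitL l i hlm hi) ω
          simp only [Pi.sub_apply] at hR
          rw [hR, hL]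
        congr 1
        refine Prod.ext ?_ ?_
        · exact hval
        · funext k
          by_cases hk : k = l
          · subst hk
            simp
          · simp only [if_neg hk]
            by_cases h2 : l + 1 ≤ k ∧ k < m
            · rw [if_pos h2, if_pos ⟨by omega, h2.2⟩]
            · rw [if_neg h2, if_neg (by omega)]
      · -- the range covers the whole right child and part of the left child
        obtain ⟨f, hf, hfe⟩ := ih (l + 1) (2 * i) a (by omega) h2i
          (by rw [← ea]; exact ha1) (le_of_lt hmid)
        refine ⟨fun p => f (θ l (p.2 l) p.1, fun k => if k = l then 0 else p.2 k)
            + (p.1 - θ l (p.2 l) p.1),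
          ((hf.comp ((hθp l).prodMk (hzerol l))).add (measurable_fst.sub (hθp l))), fun ω => ?_⟩
        have hsplit_sum : (∑ j ∈ Finset.Ico a ((i + 1) * 2 ^ (d + 1)), S m j ω)
            = (∑ j ∈ Finset.Ico a ((2 * i + 1) * 2 ^ d), S m j ω)
              + (∑ j ∈ Finset.Ico ((2 * i + 1) * 2 ^ d) ((2 * i + 1 + 1) * 2 ^ d), S m j ω) := by
          rw [eb, Finset.sum_Ico_consecutive _ (le_of_lt hmid)
            (by have := hpow; nlinarith)]
        rw [hsplit_sum, ← treesum d (l + 1) (2 * i + 1) (by omega) h2i1 ω, hfe ω]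
        have hL := congrFun (hsplitL l i hlm hi) ω
        have hR := congrFun (hsplitR l i hlm hi) ω
        simp only [Pi.sub_apply] at hR
        congr 1
        · congr 1
          refine Prod.ext ?_ ?_
          · simp only
            rw [hwl ω, ← hL]
          · funext k
            by_cases hk : k = l
            · subst hk
              simp
            · simp only [if_neg hk]
              by_cases h2 : l + 1 ≤ k ∧ k < m
              · rw [if_pos h2, if_pos ⟨by omega, h2.2⟩]
              · rw [if_neg h2, if_neg (by omega)]
        · simp only
          rw [hwl ω, ← hL, hR]
  
  -- prefix sums of a subtree are functions of the node value and one seed per level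
  have hpre : ∀ d l i b, l + d = m → i < 2 ^ l → i * 2 ^ d ≤ b → b ≤ (i + 1) * 2 ^ d →
      ∃ f : ℝ × (ℕ → ℝ) → ℝ, Measurable f ∧ ∀ ω,
        (∑ j ∈ Finset.Ico (i * 2 ^ d) b, S m j ω)
          = f (S l i ω, fun k => if l ≤ k ∧ k < m then C k (b / 2 ^ (m - k)) ω else 0) := by
    intro d
    induction d with
    | zero =>
      intro l i b hl hi hb1 hb2
      simp only [pow_zero, mul_one] at hb1 hb2 ⊢
      rcases Nat.eq_or_lt_of_le hb1 with h | h
      · exact ⟨fun _ => 0, measurable_const, fun ω => by rw [← h]; simp⟩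
      · have hb : b = i + 1 := by omega
        subst hb
        refine ⟨Prod.fst, measurable_fst, fun ω => ?_⟩
        have hlm : l = m := by omega
        subst hlm
        rw [Nat.Ico_succ_singleton, Finset.sum_singleton]
    | succ d ih =>
      intro l i b hl hi hb1 hb2
      have hlm : l < m := by omega
      have h2i : 2 * i < 2 ^ (l + 1) := by rw [pow_succ]; omega
      have h2i1 : 2 * i + 1 < 2 ^ (l + 1) := by rw [pow_succ]; omega
      have ea : i * 2 ^ (d + 1) = 2 * i * 2 ^ d := by ring
      have eb : (i + 1) * 2 ^ (d + 1) = (2 * i + 1 + 1) * 2 ^ d := by ring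
      have hpow : 0 < 2 ^ d := Nat.pow_pos (by norm_num)
      rcases Nat.eq_or_lt_of_le hb1 with hA | hA
      · exact ⟨fun _ => 0, measurable_const, fun ω => by rw [← hA]; simp⟩
      rcases Nat.eq_or_lt_of_le hb2 with hB | hB
      · -- the full node
        refine ⟨Prod.fst, measurable_fst, fun ω => ?_⟩
        rw [hB]
        exact (treesum (d + 1) l i hl hi ω).symm
      have hdiv : b / 2 ^ (d + 1) = i := key_div b i (d + 1) hb1 hB
      have hmk : m - l = d + 1 := by omega
      have hwl : ∀ ω, (if l ≤ l ∧ l < m then C l (b / 2 ^ (m - l)) ω else 0) = C l i ω := by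
        intro ω
        rw [if_pos ⟨le_refl l, hlm⟩, hmk, hdiv]
      rcases le_or_gt b ((2 * i + 1) * 2 ^ d) with hmid | hmid
      · -- the range lies entirely in the left child
        obtain ⟨f, hf, hfe⟩ := ih (l + 1) (2 * i) b (by omega) h2i
          (by rw [← ea]; omega) hmid
        refine ⟨fun p => f (θ l (p.2 l) p.1, fun k => if k = l then 0 else p.2 k),
          (hf.comp ((hθp l).prodMk (hzerol l))), fun ω => ?_⟩
        rw [ea, hfe ω]
        have hL := congrFun (hsplitL l i hlm hi) ω
        congr 1
        refine Prod.ext ?_ ?_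
        · simp only
          rw [hwl ω, ← hL]
        · funext k
          by_cases hk : k = l
          · subst hk
            simp
          · simp only [if_neg hk]
            by_cases h2 : l + 1 ≤ k ∧ k < m
            · rw [if_pos h2, if_pos ⟨by omega, h2.2⟩]
            · rw [if_neg h2, if_neg (by omega)]
      · -- the range covers the whole left child and part of the right child
        obtain ⟨f, hf, hfe⟩ := ih (l + 1) (2 * i + 1) b (by omega) h2i1 (le_of_lt hmid)
          (by rw [← eb]; omega)
        refine ⟨fun p => (θ l (p.2 l) p.1)
            + f (p.1 - θ l (p.2 l) p.1, fun k => if k = l then 0 else p.2 k),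
          ((hθp l).add (hf.comp ((measurable_fst.sub (hθp l)).prodMk (hzerol l)))), fun ω => ?_⟩
        have hsplit_sum : (∑ j ∈ Finset.Ico (i * 2 ^ (d + 1)) b, S m j ω)
            = (∑ j ∈ Finset.Ico (2 * i * 2 ^ d) ((2 * i + 1) * 2 ^ d), S m j ω)
              + (∑ j ∈ Finset.Ico ((2 * i + 1) * 2 ^ d) b, S m j ω) := by
          rw [ea, Finset.sum_Ico_consecutive _ (by nlinarith) (le_of_lt hmid)]
        rw [hsplit_sum, ← treesum d (l + 1) (2 * i) (by omega) h2i ω, hfe ω]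
        have hL := congrFun (hsplitL l i hlm hi) ω
        have hR := congrFun (hsplitR l i hlm hi) ω
        simp only [Pi.sub_apply] at hR
        congr 1
        · have hgoal : θ l (if l ≤ l ∧ l < m then C l (b / 2 ^ (m - l)) ω else 0) (S l i ω)
              = S (l + 1) (2 * i) ω := by rw [hwl ω, ← hL]
          exact hgoal.symm
        · congr 1
          refine Prod.ext ?_ ?_
          · simp only
            rw [hwl ω, ← hL, hR]
          · funext k
            by_cases hk : k = l
            · subst hk
              simp
            · simp only [if_neg hk]
              by_cases h2 : l + 1 ≤ k ∧ k < m
              · rw [if_pos h2, if_pos ⟨by omega, h2.2⟩]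
              · rw [if_neg h2, if_neg (by omega)]
  
  -- independence of the two boundary data (node values + path seeds)
  have hbind : ∀ d l i a b, l + (d + 1) = m → i < 2 ^ l →
      i * 2 ^ (d + 1) ≤ a → a < (2 * i + 1) * 2 ^ d → (2 * i + 1) * 2 ^ d < b →
      b ≤ (i + 1) * 2 ^ (d + 1) →
      IndepFun
        (fun ω => (S (l + 1) (2 * i) ω,
          fun k => if l + 1 ≤ k ∧ k < m then C k (a / 2 ^ (m - k)) ω else (0 : ℝ)))
        (fun ω => (S (l + 1) (2 * i + 1) ω,
          fun k => if l + 1 ≤ k ∧ k < m then C k (b / 2 ^ (m - k)) ω else (0 : ℝ))) ℙ := by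
    intro d l i a b hl hi ha1 ha2 hb1 hb2
    have hlm : l < m := by omega
    have h2i : 2 * i < 2 ^ (l + 1) := by rw [pow_succ]; omega
    have h2i1 : 2 * i + 1 < 2 ^ (l + 1) := by rw [pow_succ]; omega
    have H : ∀ r, r ≤ d → IndepFun
        (fun ω => (S (l + 1) (2 * i) ω,
          fun k => if l + 1 ≤ k ∧ k < l + 1 + r then C k (a / 2 ^ (m - k)) ω else (0 : ℝ)))
        (fun ω => (S (l + 1) (2 * i + 1) ω,
          fun k => if l + 1 ≤ k ∧ k < l + 1 + r then C k (b / 2 ^ (m - k)) ω else (0 : ℝ))) ℙ := by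
      intro r
      induction r with
      | zero =>
        intro _
        have h := (hI l i hlm hi).1.comp
          (measurable_id.prodMk measurable_const :
            Measurable (fun x : ℝ => (x, fun _ : ℕ => (0 : ℝ))))
          (measurable_id.prodMk measurable_const :
            Measurable (fun x : ℝ => (x, fun _ : ℕ => (0 : ℝ))))
        have e1 : ∀ (c x : ℕ), ((fun v : ℝ => (v, fun _ : ℕ => (0 : ℝ))) ∘ S (l + 1) c)
            = fun ω => (S (l + 1) c ω,
              fun k => if l + 1 ≤ k ∧ k < l + 1 + 0 then C k (x / 2 ^ (m - k)) ω else (0 : ℝ)) := by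
          intro c x
          funext ω
          simp only [Function.comp_apply, Prod.mk.injEq]
          exact ⟨trivial, by funext k; simp [show ¬(l + 1 ≤ k ∧ k < l + 1 + 0) by omega]⟩
        rw [← e1 (2 * i) a, ← e1 (2 * i + 1) b]
        exact h
      | succ r ihr =>
        intro hrd
        have hprev := ihr (by omega)
        have hnm : l + 1 + r < m := by omega
        have hmn : m - (l + 1 + r) = d - r := by omega
        have hpowdr : 0 < 2 ^ (d - r) := Nat.pow_pos (by norm_num)
        have hjlt : a / 2 ^ (d - r) < (2 * i + 1) * 2 ^ r := by
          rw [Nat.div_lt_iff_lt_mul hpowdr]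
          calc a < (2 * i + 1) * 2 ^ d := ha2
          _ = (2 * i + 1) * 2 ^ r * 2 ^ (d - r) := by
              rw [mul_assoc, ← pow_add]
              congr 2
              omega
        have hjge : (2 * i + 1) * 2 ^ r ≤ b / 2 ^ (d - r) := by
          rw [Nat.le_div_iff_mul_le hpowdr]
          calc (2 * i + 1) * 2 ^ r * 2 ^ (d - r) = (2 * i + 1) * 2 ^ d := by
                rw [mul_assoc, ← pow_add]
                congr 2
                omega
          _ ≤ b := le_of_lt hb1
        have hjne : a / 2 ^ (m - (l + 1 + r)) ≠ b / 2 ^ (m - (l + 1 + r)) := by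
          rw [hmn]; omega
        -- the two new seeds are independent
        have hUV : IndepFun (C (l + 1 + r) (a / 2 ^ (m - (l + 1 + r))))
            (C (l + 1 + r) (b / 2 ^ (m - (l + 1 + r)))) ℙ := by
          have hcard : ({a / 2 ^ (m - (l + 1 + r)), b / 2 ^ (m - (l + 1 + r))} : Finset ℕ).card ≤ 2 :=
            (Finset.card_insert_le _ _).trans (by simp)
          exact (hkwise (l + 1 + r) _ hcard).indepFun
            (i := ⟨a / 2 ^ (m - (l + 1 + r)), by simp⟩)
            (j := ⟨b / 2 ^ (m - (l + 1 + r)), by simp⟩)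
            (by simpa [Subtype.ext_iff] using hjne)
        -- the old pair is jointly independent of the two new seeds
        obtain ⟨G1, hG1, hG1e⟩ := hrep (l + 1 + r) (l + 1) (by omega) (by omega) (2 * i) h2i
        obtain ⟨G2, hG2, hG2e⟩ := hrep (l + 1 + r) (l + 1) (by omega) (by omega) (2 * i + 1) h2i1
        have hvecmeas : ∀ x : ℕ, Measurable (fun p : ℝ × (ℕ → ℕ → ℝ) =>
            fun k => if l + 1 ≤ k ∧ k < l + 1 + r then p.2 k (x / 2 ^ (m - k)) else (0 : ℝ)) := by
          intro x
          refine measurable_pi_lambda _ (fun k => ?_)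
          by_cases h : l + 1 ≤ k ∧ k < l + 1 + r
          · simpa [h, Function.comp_def] using (measurable_pi_apply (x / 2 ^ (m - k))).comp
              ((measurable_pi_apply k).comp
                (measurable_snd : Measurable (Prod.snd : ℝ × (ℕ → ℕ → ℝ) → ℕ → ℕ → ℝ)))
          · simp only [h, if_false]; exact measurable_const
        have hbig : IndepFun
            (fun ω => ((S (l + 1) (2 * i) ω,
                fun k => if l + 1 ≤ k ∧ k < l + 1 + r then C k (a / 2 ^ (m - k)) ω else (0 : ℝ)),
              (S (l + 1) (2 * i + 1) ω,
                fun k => if l + 1 ≤ k ∧ k < l + 1 + r then C k (b / 2 ^ (m - k)) ω else (0 : ℝ))))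
            (fun ω => (C (l + 1 + r) (a / 2 ^ (m - (l + 1 + r))) ω,
              C (l + 1 + r) (b / 2 ^ (m - (l + 1 + r))) ω)) ℙ := by
          have hΦ : Measurable (fun p : ℝ × (ℕ → ℕ → ℝ) =>
              ((G1 p, fun k => if l + 1 ≤ k ∧ k < l + 1 + r then p.2 k (a / 2 ^ (m - k)) else (0 : ℝ)),
               (G2 p, fun k => if l + 1 ≤ k ∧ k < l + 1 + r then p.2 k (b / 2 ^ (m - k)) else (0 : ℝ)))) :=
            (hG1.prodMk (hvecmeas a)).prodMk (hG2.prodMk (hvecmeas b))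
          have hψ : Measurable (fun v : ℕ → ℝ =>
              (v (a / 2 ^ (m - (l + 1 + r))), v (b / 2 ^ (m - (l + 1 + r))))) :=
            (measurable_pi_apply _).prodMk (measurable_pi_apply _)
          have e1 : ((fun p : ℝ × (ℕ → ℕ → ℝ) =>
              ((G1 p, fun k => if l + 1 ≤ k ∧ k < l + 1 + r then p.2 k (a / 2 ^ (m - k)) else (0 : ℝ)),
               (G2 p, fun k => if l + 1 ≤ k ∧ k < l + 1 + r then p.2 k (b / 2 ^ (m - k)) else (0 : ℝ)))) ∘
              (fun ω => (S 0 0 ω, fun k j => if k < l + 1 + r then C k j ω else (0 : ℝ))))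
              = (fun ω => ((S (l + 1) (2 * i) ω,
                  fun k => if l + 1 ≤ k ∧ k < l + 1 + r then C k (a / 2 ^ (m - k)) ω else (0 : ℝ)),
                (S (l + 1) (2 * i + 1) ω,
                  fun k => if l + 1 ≤ k ∧ k < l + 1 + r then C k (b / 2 ^ (m - k)) ω else (0 : ℝ)))) := by
            funext ω
            simp only [Function.comp_apply, Prod.mk.injEq]
            refine ⟨⟨(hG1e ω).symm, ?_⟩, (hG2e ω).symm, ?_⟩ <;>
            · funext k
              by_cases h2 : l + 1 ≤ k ∧ k < l + 1 + r
              · simp [h2, show k < l + 1 + r from h2.2]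
              · simp only [h2, if_false]
          rw [← e1]
          exact (B_indep (l + 1 + r)).comp hΦ hψ
        -- reshuffle to get the (r+1)-truncated independence
        have hmeaspair : ∀ c x : ℕ, Measurable (fun ω => (S (l + 1) c ω,
            fun k => if l + 1 ≤ k ∧ k < l + 1 + r then C k (x / 2 ^ (m - k)) ω else (0 : ℝ))) := by
          intro c x
          refine (hSmeas (l + 1) c).prodMk (measurable_pi_lambda _ (fun k => ?_))
          by_cases h : l + 1 ≤ k ∧ k < l + 1 + r
          · simpa [h] using hCmeas k (x / 2 ^ (m - k))
          · simp only [h, if_false]; exact measurable_const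
        have hstep := indepFun_reshuffle (hmeaspair (2 * i) a) (hmeaspair (2 * i + 1) b)
          (hCmeas _ _) (hCmeas _ _) hprev hUV hbig
        -- absorb the new seeds into the vectors
        have hψL : Measurable (fun q : (ℝ × (ℕ → ℝ)) × ℝ =>
            (q.1.1, fun k => if k = l + 1 + r then q.2 else q.1.2 k)) := by
          refine (measurable_fst.fst.prodMk (measurable_pi_lambda _ (fun k => ?_)))
          by_cases hk : k = l + 1 + r
          · simpa [hk] using measurable_snd
          · simpa [hk, Function.comp_def] using (measurable_pi_apply k).comp measurable_fst.snd
        have eL : ∀ (c x : ℕ), ((fun q : (ℝ × (ℕ → ℝ)) × ℝ =>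
              (q.1.1, fun k => if k = l + 1 + r then q.2 else q.1.2 k)) ∘
            (fun ω => ((S (l + 1) c ω,
              fun k => if l + 1 ≤ k ∧ k < l + 1 + r then C k (x / 2 ^ (m - k)) ω else (0 : ℝ)),
              C (l + 1 + r) (x / 2 ^ (m - (l + 1 + r))) ω)))
            = (fun ω => (S (l + 1) c ω,
              fun k => if l + 1 ≤ k ∧ k < l + 1 + (r + 1) then C k (x / 2 ^ (m - k)) ω
                else (0 : ℝ))) := by
          intro c x
          funext ω
          simp only [Function.comp_apply, Prod.mk.injEq]
          refine ⟨trivial, ?_⟩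
          funext k
          by_cases hk : k = l + 1 + r
          · subst hk
            simp [show l + 1 ≤ l + 1 + r ∧ l + 1 + r < l + 1 + (r + 1) by omega]
          · by_cases h2 : l + 1 ≤ k ∧ k < l + 1 + r
            · simp [hk, h2, show l + 1 ≤ k ∧ k < l + 1 + (r + 1) by omega]
            · simp only [hk, h2, if_false, show ¬(l + 1 ≤ k ∧ k < l + 1 + (r + 1)) by omega]
        rw [← eL (2 * i) a, ← eL (2 * i + 1) b]
        exact hstep.comp hψL hψL
    have hfull := H d le_rfl
    have hld : l + 1 + d = m := by omega
    rw [hld] at hfull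
    exact hfull
  
  -- main induction: law of a range sum inside a subtree
  have main : ∀ d l i a b, l + d = m → i < 2 ^ l → i * 2 ^ d ≤ a → a ≤ b →
      b ≤ (i + 1) * 2 ^ d →
      Measure.map (fun ω => ∑ j ∈ Finset.Ico a b, S m j ω) ℙ = convPow ν (b - a) := by
    intro d
    induction d with
    | zero =>
      intro l i a b hl hi ha hab hb
      simp only [pow_zero, mul_one] at ha hb
      have hlm : m = l := by omega
      rcases Nat.eq_or_lt_of_le hab with h | h
      · subst h
        have e : (fun ω => ∑ j ∈ Finset.Ico a a, S m j ω) = fun _ => (0 : ℝ) := by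
          funext ω; simp
        rw [e, Measure.map_const, measure_univ, one_smul, Nat.sub_self, convPow_zero]
      · have hab' : a = i ∧ b = i + 1 := by omega
        obtain ⟨ha', hb'⟩ := hab'
        subst ha'
        subst hb'
        have e : (fun ω => ∑ j ∈ Finset.Ico a (a + 1), S m j ω) = S m a := by
          funext ω; rw [Nat.Ico_succ_singleton, Finset.sum_singleton]
        rw [e]
        have hm1 : m - 1 < m := by omega
        have hpm : (2 : ℕ) ^ m = 2 ^ (m - 1) * 2 := by
          rw [← pow_succ]
          congr 1
          omega
        subst hlm
        have hip : a / 2 < 2 ^ (m - 1) := by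
          rw [hpm] at hi
          omega
        have hI' := hI (m - 1) (a / 2) hm1 hip
        have hmm : m - 1 + 1 = m := by omega
        have hsub : a + 1 - a = 1 := by omega
        rw [hsub]
        rcases Nat.mod_two_eq_zero_or_one a with h2 | h2
        · have ha2 : a = 2 * (a / 2) := by omega
          rw [ha2]
          have h := hI'.2.1
          rw [hmm] at h
          rw [h]
          norm_num
        · have ha2 : a = 2 * (a / 2) + 1 := by omega
          rw [ha2]
          have h := hI'.2.2
          rw [hmm] at h
          rw [h]
          norm_num
    | succ d ih =>
      intro l i a b hl hi ha hab hb
      have hlm : l < m := by omega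
      have h2i : 2 * i < 2 ^ (l + 1) := by rw [pow_succ]; omega
      have h2i1 : 2 * i + 1 < 2 ^ (l + 1) := by rw [pow_succ]; omega
      have ea : i * 2 ^ (d + 1) = 2 * i * 2 ^ d := by ring
      have eb : (i + 1) * 2 ^ (d + 1) = (2 * i + 1 + 1) * 2 ^ d := by ring
      rcases le_or_gt b ((2 * i + 1) * 2 ^ d) with hc | hc
      · exact ih (l + 1) (2 * i) a b (by omega) h2i (by rw [← ea]; exact ha) hab hc
      rcases le_or_gt ((2 * i + 1) * 2 ^ d) a with hc2 | hc2
      · exact ih (l + 1) (2 * i + 1) a b (by omega) h2i1 hc2 hab (by rw [← eb]; exact hb)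
      · -- straddling range
        obtain ⟨f, hf, hfe⟩ := hsuf d (l + 1) (2 * i) a (by omega) h2i
          (by rw [← ea]; exact ha) (le_of_lt hc2)
        obtain ⟨g, hg, hge⟩ := hpre d (l + 1) (2 * i + 1) b (by omega) h2i1
          (le_of_lt hc) (by rw [← eb]; exact hb)
        have hIndXY : IndepFun (fun ω => ∑ j ∈ Finset.Ico a ((2 * i + 1) * 2 ^ d), S m j ω)
            (fun ω => ∑ j ∈ Finset.Ico ((2 * i + 1) * 2 ^ d) b, S m j ω) ℙ := by
          have hb0 := hbind d l i a b hl hi ha hc2 hc hb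
          have h := hb0.comp hf hg
          have e1 : (f ∘ (fun ω => (S (l + 1) (2 * i) ω,
              fun k => if l + 1 ≤ k ∧ k < m then C k (a / 2 ^ (m - k)) ω else (0 : ℝ))))
              = fun ω => ∑ j ∈ Finset.Ico a ((2 * i + 1) * 2 ^ d), S m j ω :=
            funext fun ω => (hfe ω).symm
          have e2 : (g ∘ (fun ω => (S (l + 1) (2 * i + 1) ω,
              fun k => if l + 1 ≤ k ∧ k < m then C k (b / 2 ^ (m - k)) ω else (0 : ℝ))))
              = fun ω => ∑ j ∈ Finset.Ico ((2 * i + 1) * 2 ^ d) b, S m j ω := by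
            funext ω
            have := (hge ω).symm
            simpa [show (2 * i + 1) * 2 ^ d = (2 * i) * 2 ^ d + 2 ^ d by ring] using this
          rw [e1, e2] at h
          exact h
        have hXlaw := ih (l + 1) (2 * i) a ((2 * i + 1) * 2 ^ d) (by omega) h2i
          (by rw [← ea]; exact ha) (le_of_lt hc2) le_rfl
        have hYlaw := ih (l + 1) (2 * i + 1) ((2 * i + 1) * 2 ^ d) b (by omega) h2i1
          le_rfl (le_of_lt hc) (by rw [← eb]; exact hb)
        have hsum : (fun ω => ∑ j ∈ Finset.Ico a b, S m j ω)
            = fun ω => (∑ j ∈ Finset.Ico a ((2 * i + 1) * 2 ^ d), S m j ω)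
              + (∑ j ∈ Finset.Ico ((2 * i + 1) * 2 ^ d) b, S m j ω) := by
          funext ω
          rw [Finset.sum_Ico_consecutive _ (le_of_lt hc2) (le_of_lt hc)]
        rw [hsum, map_add_convPow ν (hsum_meas _ _) (hsum_meas _ _) hXlaw hYlaw hIndXY]
        congr 1
        omega
  intro a b hab hb
  have h := main m 0 0 a b (by omega) (by norm_num) (by omega) hab
    (by simpa using le_of_lt hb)
  exact h
end
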